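/- arXiv:2101.05676 — 6 statements merged into one kernel-verified Lean document; each statement's English description precedes it below -/
import Mathlib

section
/- If (a_1, ..., a_n) with n ≥ 4 is the quiddity sequence of a closed integral frieze pattern of order n (i.e., a sequence of positive integers generating, via the unimodular rule, a frieze of positive integers that closes with a row of 1s after n-3 nontrivial rows), then at least two of the entries a_i are equal to 1. -/
/-- A closed integral frieze pattern of order `n`, encoded as a function on pairs of
integer indices, supported on the band `i ≤ j ≤ i + n`, with bounding rows of 0s and 1s,
positive integer entries in the interior, and the unimodular diamond rule. -/
def IsClosedFrieze (n : ℕ) (a : ℤ → ℤ → ℤ) : Prop :=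
  (∀ i : ℤ, a i i = 0) ∧
  (∀ i : ℤ, a i (i + 1) = 1) ∧
  (∀ i : ℤ, a i (i + n - 1) = 1) ∧
  (∀ i : ℤ, a i (i + n) = 0) ∧
  (∀ i j : ℤ, i + 2 ≤ j → j ≤ i + n - 2 → 0 < a i j) ∧
  (∀ i j : ℤ, i + 1 ≤ j → j ≤ i + n - 1 →
    a i j * a (i + 1) (j + 1) - a i (j + 1) * a (i + 1) j = 1) ∧
  (∀ i j : ℤ, j < i → a i j = 0) ∧
  (∀ i j : ℤ, i + n < j → a i j = 0)
/-- `q : ZMod n → ℤ` is the quiddity sequence of a closed integral frieze of order `n`. -/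
def IsQuiddity (n : ℕ) (q : ZMod n → ℤ) : Prop :=
  ∃ a : ℤ → ℤ → ℤ, IsClosedFrieze n a ∧ ∀ i : ℤ, a i (i + 2) = q (i : ZMod n)

section Aux

variable {n : ℕ} {a : ℤ → ℤ → ℤ}

lemma frieze_nonneg (h : IsClosedFrieze n a) (hn : 4 ≤ n) :
    ∀ i j : ℤ, i ≤ j → j ≤ i + n → 0 ≤ a i j := by
  obtain ⟨h0, h1, h2, h3, hpos, hd, -, -⟩ := h
  intro i j hij hjn
  by_cases e0 : j = i
  · simp [e0, h0]
  by_cases e1 : j = i + 1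
  · simp [e1, h1]
  by_cases e2 : j = i + (n : ℤ) - 1
  · rw [e2, h2]; norm_num
  by_cases e3 : j = i + (n : ℤ)
  · rw [e3, h3]
  · exact le_of_lt (hpos i j (by omega) (by omega))

lemma frieze_rec (h : IsClosedFrieze n a) (hn : 4 ≤ n) :
    ∀ k : ℕ, ∀ i j : ℤ, j = i + k → 1 ≤ j - i → j ≤ i + n - 1 →
      a i (j + 1) + a i (j - 1) = a (j - 1) (j + 1) * a i j := by
  obtain ⟨h0, h1, h2, h3, hpos, hd, -, -⟩ := h
  intro k
  induction k with
  | zero => intro i j hj h1' _; omega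
  | succ k ih =>
    intro i j hj h1' h2'
    rcases Nat.eq_zero_or_pos k with rfl | hk1
    · -- base case : j = i + 1
      have hji : j = i + 1 := by push_cast at hj; omega
      subst hji
      have e : i + 1 - 1 = i := by ring
      rw [e, h0 i, h1 i]
      ring
    · -- step : use the diamond rule twice and the recurrence one row below
      have hji : j = (i + 1) + (k : ℤ) := by push_cast at hj; omega
      have IH := ih (i + 1) j (by push_cast; omega) (by omega) (by omega)
      have D1 := hd i j (by omega) (by omega)
      have D2 := hd i (j - 1) (by omega) (by omega)
      rw [show j - 1 + 1 = j by ring] at D2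
      have hposj : 0 < a (i + 1) j := by
        by_cases e : j = i + 2
        · rw [e, show i + 2 = (i + 1) + 1 by ring, h1]; norm_num
        · exact hpos (i + 1) j (by omega) (by omega)
      have key : (a i (j + 1) + a i (j - 1)) * a (i + 1) j
          = (a (j - 1) (j + 1) * a i j) * a (i + 1) j := by
        linear_combination (-1 : ℤ) * D1 + D2 + a i j * IH
      exact mul_right_cancel₀ (ne_of_gt hposj) key

/-- If all quiddity entries on the window `[i, i+n-2]` are `≥ 2`, contradiction. -/
lemma frieze_window (h : IsClosedFrieze n a) (hn : 4 ≤ n) (i : ℤ)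
    (H : ∀ m : ℤ, i ≤ m → m ≤ i + n - 2 → 2 ≤ a m (m + 2)) : False := by
  have hnn := frieze_nonneg h hn
  have hrec := frieze_rec h hn
  obtain ⟨h0, h1, h2, h3, hpos, hd, -, -⟩ := h
  have claim : ∀ t : ℕ, (t : ℤ) ≤ (n : ℤ) - 1 →
      1 ≤ a i (i + t + 1) - a i (i + t) := by
    intro t
    induction t with
    | zero =>
      intro _
      push_cast
      rw [show i + 0 + 1 = i + 1 by ring, show i + (0:ℤ) = i by ring, h1, h0]
      norm_num
    | succ t iht =>
      intro ht
      push_cast at ht ⊢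
      rw [show i + ((t:ℤ) + 1) + 1 = (i + t + 1) + 1 from by ring,
          show i + ((t:ℤ) + 1) = i + t + 1 from by ring]
      have iht' := iht (by omega)
      have hr := hrec (t + 1) i (i + t + 1) (by push_cast; ring) (by omega) (by omega)
      rw [show i + (t:ℤ) + 1 - 1 = i + t from by ring] at hr
      have hq2 : 2 ≤ a (i + t) (i + t + 1 + 1) := by
        have := H (i + t) (by omega) (by omega)
        rwa [show i + (t:ℤ) + 2 = i + t + 1 + 1 from by ring] at this
      have hj0 : 0 ≤ a i (i + t + 1) := hnn i (i + t + 1) (by omega) (by omega)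
      nlinarith [hr, hq2, hj0, iht']
  have hfin := claim (n - 1) (by push_cast; omega)
  have e1 : i + ((n : ℤ) - 1) + 1 = i + n := by ring
  have ecast : ((n - 1 : ℕ) : ℤ) = (n : ℤ) - 1 := by push_cast; omega
  rw [ecast, e1, show i + ((n:ℤ) - 1) = i + (n:ℤ) - 1 by ring, h3, h2] at hfin
  omega

lemma frieze_exists_one (h : IsClosedFrieze n a) (hn : 4 ≤ n) (i : ℤ) :
    ∃ m : ℤ, i ≤ m ∧ m ≤ i + n - 2 ∧ a m (m + 2) = 1 := by
  by_contra hcon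
  push_neg at hcon
  refine frieze_window h hn i (fun m hm1 hm2 => ?_)
  have hpos := h.2.2.2.2.1 m (m + 2) (by omega) (by omega)
  have hne := hcon m hm1 hm2
  omega

end Aux

/-- Any quiddity sequence of a closed integral frieze of order `n ≥ 4` contains at least
two entries equal to 1. -/
theorem quiddity_has_two_ones (n : ℕ) (hn : 4 ≤ n) (q : ZMod n → ℤ)
    (hq : IsQuiddity n q) :
    ∃ i j : ZMod n, i ≠ j ∧ q i = 1 ∧ q j = 1 := by
  obtain ⟨a, hf, hquid⟩ := hq
  obtain ⟨m1, hm1a, hm1b, hm1⟩ := frieze_exists_one hf hn 0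
  obtain ⟨m2, hm2a, hm2b, hm2⟩ := frieze_exists_one hf hn (m1 + 1)
  refine ⟨(m1 : ZMod n), (m2 : ZMod n), ?_, ?_, ?_⟩
  · intro hcontra
    have hmod : m1 ≡ m2 [ZMOD (n : ℤ)] :=
      (ZMod.intCast_eq_intCast_iff m1 m2 n).mp hcontra
    have hdvd : (n : ℤ) ∣ m2 - m1 := Int.ModEq.dvd hmod
    have := Int.le_of_dvd (by omega) hdvd
    omega
  · rw [← hquid m1]; exact hm1
  · rw [← hquid m2]; exact hm2
end

section
/- If (a_1, ..., a_n) with n ≥ 4 is the quiddity sequence of a closed integral frieze pattern of order n, then no two cyclically adjacent entries a_i, a_{i+1} (indices mod n) are both equal to 1. -/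
/-- In a quiddity sequence of a closed integral frieze of order `n ≥ 4`, no two cyclically
adjacent entries are both equal to 1. -/
theorem quiddity_no_adjacent_ones (n : ℕ) (hn : 4 ≤ n) (q : ZMod n → ℤ)
    (hq : IsQuiddity n q) :
    ∀ i : ZMod n, ¬(q i = 1 ∧ q (i + 1) = 1) := by
  obtain ⟨a, ⟨h0, h1, hpen, htop, hpos, hdia, -, -⟩, hqa⟩ := hq
  rintro i ⟨hi, hi1⟩
  haveI : NeZero n := ⟨by omega⟩
  set k : ℤ := (i.val : ℤ) with hk
  have hki : ((k : ℤ) : ZMod n) = i := by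
    simp [hk, ZMod.natCast_val, ZMod.intCast_cast]
  have e1 : a k (k + 2) = 1 := by rw [hqa k, hki]; exact hi
  have e2 : a (k + 1) (k + 3) = 1 := by
    have := hqa (k + 1)
    rw [show (k:ℤ) + 1 + 2 = k + 3 by ring] at this
    rw [this]
    push_cast
    rw [hki]; exact hi1
  have hd := hdia k (k + 2) (by omega) (by omega)
  rw [e1, show (k:ℤ) + 2 + 1 = k + 3 by ring, e2,
    show (k:ℤ) + 2 = (k + 1) + 1 by ring, h1 (k + 1)] at hd
  have e3 : a k (k + 3) = 0 := by linarith
  rcases eq_or_lt_of_le hn with h4 | h5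
  · have := hpen k
    rw [← h4] at this
    norm_num [show (k:ℤ) + 4 - 1 = k + 3 by ring] at this
    omega
  · have := hpos k (k + 3) (by omega) (by omega)
    omega
end

section
/- Let T be a triangulation of a convex n-gon (n ≥ 3) with vertices labeled 1,...,n, and let a_i be the number of triangles of T incident with vertex i. Then (a_1, ..., a_n) is the quiddity sequence of a closed integral frieze pattern of order n. -/
attribute [local instance] Classical.propDecidable

/-- A triangulation of a convex `n`-gon with vertices labelled by `ZMod n` (in cyclic order):
a maximal collection of pairwise non-crossing diagonals, i.e. `n - 3` of them. -/
structure PolygonTriangulation (n : ℕ) [NeZero n] where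
  diags : Finset (ZMod n × ZMod n)
  lt_of_mem : ∀ d ∈ diags, d.1.val < d.2.val
  not_boundary : ∀ d ∈ diags, d.1.val + 1 < d.2.val ∧ ¬(d.1.val = 0 ∧ d.2.val = n - 1)
  noncrossing : ∀ d ∈ diags, ∀ e ∈ diags,
    ¬(d.1.val < e.1.val ∧ e.1.val < d.2.val ∧ d.2.val < e.2.val)
  card_diags : diags.card = n - 3

/-- `i` and `j` are joined by an edge of the triangulation: a diagonal or a boundary edge. -/
def IsTriEdge {n : ℕ} [NeZero n] (T : PolygonTriangulation n) (i j : ZMod n) : Prop :=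
  (i, j) ∈ T.diags ∨ (j, i) ∈ T.diags ∨ j = i + 1 ∨ i = j + 1

/-- The triangles of a triangulation, as 3-element vertex sets all of whose sides are edges. -/
noncomputable def triangles {n : ℕ} [NeZero n] (T : PolygonTriangulation n) :
    Finset (Finset (ZMod n)) :=
  Finset.univ.filter (fun s => s.card = 3 ∧ ∀ i ∈ s, ∀ j ∈ s, i ≠ j → IsTriEdge T i j)

/-- The number of triangles of the triangulation incident with vertex `v`. -/
noncomputable def triCount {n : ℕ} [NeZero n] (T : PolygonTriangulation n) (v : ZMod n) : ℕ :=
  ((triangles T).filter (fun s => v ∈ s)).card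

section ConwayCoxeter

open Matrix

abbrev Mat := Matrix (Fin 2) (Fin 2) ℤ

def Mm (x : ℤ) : Mat := !![x, -1; 1, 0]

def Pp (q : ℤ → ℤ) : ℤ → ℕ → Mat
  | _, 0 => 1
  | i, (ℓ+1) => Mm (q i) * Pp q (i+1) ℓ

def cc (q : ℤ → ℤ) (i : ℤ) (ℓ : ℕ) : ℤ := Pp q i ℓ 0 0

lemma Pp_concat (q : ℤ → ℤ) (ℓ : ℕ) : ∀ (i : ℤ) (m : ℕ),
    Pp q i (ℓ + m) = Pp q i ℓ * Pp q (i + ℓ) m := by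
  induction ℓ with
  | zero => intro i m; simp [Pp]
  | succ ℓ ih =>
      intro i m
      have : ℓ + 1 + m = (ℓ + m) + 1 := by omega
      rw [this]
      show Mm (q i) * Pp q (i+1) (ℓ + m) = (Mm (q i) * Pp q (i+1) ℓ) * Pp q (i + (ℓ+1:ℕ)) m
      rw [ih (i+1) m, mul_assoc]
      congr 3
      push_cast; ring

lemma Pp_succ_right (q : ℤ → ℤ) (i : ℤ) (ℓ : ℕ) :
    Pp q i (ℓ + 1) = Pp q i ℓ * Mm (q (i + ℓ)) := by
  rw [Pp_concat q ℓ i 1]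
  simp [Pp]

lemma Pp_det (q : ℤ → ℤ) (i : ℤ) (ℓ : ℕ) : (Pp q i ℓ).det = 1 := by
  induction ℓ generalizing i with
  | zero => simp [Pp]
  | succ ℓ ih =>
      show (Mm (q i) * Pp q (i+1) ℓ).det = 1
      rw [Matrix.det_mul, ih]
      simp [Mm, Matrix.det_fin_two_of]

lemma Pp_entry10 (q : ℤ → ℤ) (i : ℤ) (ℓ : ℕ) :
    Pp q i (ℓ + 1) 1 0 = cc q (i+1) ℓ := by
  show (Mm (q i) * Pp q (i+1) ℓ) 1 0 = _
  simp [Mm, cc, Matrix.mul_apply, Fin.sum_univ_two]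

lemma Pp_entry01 (q : ℤ → ℤ) (i : ℤ) (ℓ : ℕ) :
    Pp q i (ℓ + 1) 0 1 = -cc q i ℓ := by
  rw [Pp_succ_right]
  simp [Mm, cc, Matrix.mul_apply, Fin.sum_univ_two]

lemma Pp_entry11 (q : ℤ → ℤ) (i : ℤ) (ℓ : ℕ) :
    Pp q i (ℓ + 2) 1 1 = -cc q (i+1) ℓ := by
  show (Mm (q i) * Pp q (i+1) (ℓ+1)) 1 1 = _
  rw [Matrix.mul_apply]
  simp [Mm, Fin.sum_univ_two, Pp_entry01]

lemma cc_zero (q : ℤ → ℤ) (i : ℤ) : cc q i 0 = 1 := by simp [cc, Pp]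

lemma cc_one (q : ℤ → ℤ) (i : ℤ) : cc q i 1 = q i := by
  simp [cc, Pp, Mm, Matrix.mul_apply, Fin.sum_univ_two]

lemma diamond_c (q : ℤ → ℤ) (i : ℤ) (m : ℕ) :
    cc q i (m+1) * cc q (i+1) (m+1) - cc q i (m+2) * cc q (i+1) m = 1 := by
  have hd := Pp_det q i (m+2)
  rw [Matrix.det_fin_two] at hd
  have h00 : Pp q i (m+2) 0 0 = cc q i (m+2) := rfl
  have h01 := Pp_entry01 q i (m+1)
  have h10 := Pp_entry10 q i (m+1)
  have h11 := Pp_entry11 q i m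
  rw [h00, h01, h10, h11] at hd
  linarith

lemma Pp_congr (q q' : ℤ → ℤ) (ℓ : ℕ) : ∀ i : ℤ, (∀ k : ℤ, i ≤ k → k < i + ℓ → q k = q' k) →
    Pp q i ℓ = Pp q' i ℓ := by
  induction ℓ with
  | zero => intro i _; rfl
  | succ ℓ ih =>
      intro i h
      show Mm (q i) * Pp q (i+1) ℓ = Mm (q' i) * Pp q' (i+1) ℓ
      rw [h i le_rfl (by push_cast; omega), ih (i+1) (fun k hk hk' => h k (by omega) (by push_cast at hk' ⊢; omega))]

lemma Pp_shift (q : ℤ → ℤ) (c : ℤ) (ℓ : ℕ) : ∀ i : ℤ,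
    Pp (fun k => q (k + c)) i ℓ = Pp q (i + c) ℓ := by
  induction ℓ with
  | zero => intro i; rfl
  | succ ℓ ih =>
      intro i
      show Mm (q (i + c)) * Pp (fun k => q (k+c)) (i+1) ℓ = Mm (q (i+c)) * Pp q (i+c+1) ℓ
      rw [ih (i+1)]; ring_nf

lemma Pp_period (q : ℤ → ℤ) (m : ℕ) (hper : ∀ i : ℤ, q (i + m) = q i) (ℓ : ℕ) :
    ∀ i : ℤ, Pp q (i + m) ℓ = Pp q i ℓ := by
  induction ℓ with
  | zero => intro i; rfl
  | succ ℓ ih =>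
      intro i
      show Mm (q (i + m)) * Pp q (i + m + 1) ℓ = Mm (q i) * Pp q (i+1) ℓ
      have : i + (m:ℤ) + 1 = (i + 1) + m := by ring
      rw [hper i, this, ih (i+1)]

lemma Pp_period_mul (q : ℤ → ℤ) (m : ℕ) (hper : ∀ i : ℤ, q (i + m) = q i) (ℓ : ℕ)
    (i : ℤ) : ∀ t : ℤ, Pp q (i + m * t) ℓ = Pp q i ℓ := by
  intro t
  induction t using Int.induction_on with
  | zero => simp
  | succ k ih =>
      have : i + m * (k + 1) = (i + m * k) + m := by ring
      rw [this, Pp_period q m hper ℓ, ih]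
  | pred k ih =>
      have : i + (m:ℤ) * (-k - 1) + m = i + m * (-k) := by ring
      have h2 := Pp_period q m hper ℓ (i + m * (-k - 1))
      rw [this] at h2
      rw [← h2]
      exact ih

lemma Pp_mod (q : ℤ → ℤ) (n : ℕ) (hn : 0 < n) (hper : ∀ i : ℤ, q (i + n) = q i) (ℓ : ℕ)
    (i : ℤ) : Pp q i ℓ = Pp q (i % n) ℓ := by
  have h := Pp_period_mul q n hper ℓ (i % n) (i / n)
  have : (i % n) + n * (i / n) = i := Int.emod_add_mul_ediv i n
  rw [this] at h
  exact h

def ClosurePos (n : ℕ) (q : ℤ → ℤ) : Prop :=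
  (∀ i : ℤ, Pp q i n = -1) ∧ (∀ (i : ℤ) (ℓ : ℕ), 1 ≤ ℓ → ℓ + 3 ≤ n → 0 < cc q i ℓ)

def Mminv (x : ℤ) : Mat := !![0, 1; -1, x]

lemma Mminv_mul (x : ℤ) : Mminv x * Mm x = 1 ∧ Mm x * Mminv x = 1 := by
  constructor <;> · ext i j; fin_cases i <;> fin_cases j <;>
    simp [Mm, Mminv, Matrix.mul_apply, Fin.sum_univ_two, Matrix.one_apply]

lemma neg_one_entries : (-1 : Mat) 0 0 = -1 ∧ (-1 : Mat) 1 1 = -1 ∧ (-1 : Mat) 0 1 = 0 ∧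
    (-1 : Mat) 1 0 = 0 := by
  norm_num [Matrix.neg_apply, Matrix.one_apply]

lemma window_zero (n : ℕ) (q : ℤ → ℤ) (hn : 3 ≤ n) (hclo : ∀ i : ℤ, Pp q i n = -1) :
    ∀ i : ℤ, cc q i (n - 1) = 0 := by
  obtain ⟨m, rfl⟩ : ∃ m, n = m + 3 := ⟨n - 3, by omega⟩
  intro i
  have h : Pp q (i-1) (m + 3) 1 0 = (-1 : Mat) 1 0 := by rw [hclo]
  rw [show m + 3 = (m+2) + 1 by omega, Pp_entry10] at h
  rw [neg_one_entries.2.2.2] at h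
  simpa using h

lemma window_one (n : ℕ) (q : ℤ → ℤ) (hn : 3 ≤ n) (hclo : ∀ i : ℤ, Pp q i n = -1) :
    ∀ i : ℤ, cc q i (n - 2) = 1 := by
  obtain ⟨m, rfl⟩ : ∃ m, n = m + 3 := ⟨n - 3, by omega⟩
  intro i
  have h : Pp q (i-1) (m + 3) 1 1 = (-1 : Mat) 1 1 := by rw [hclo]
  rw [show m + 3 = (m+2) + 1 by omega, Pp_succ_right, Matrix.mul_apply, Fin.sum_univ_two,
    show m + 2 = (m+1) + 1 by omega, Pp_entry10] at h
  norm_num [Mm, Matrix.neg_apply, Matrix.one_apply] at h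
  exact h

lemma closure_all (n : ℕ) (q : ℤ → ℤ) (hn : 3 ≤ n) (hper : ∀ i : ℤ, q (i + n) = q i)
    (i0 : ℤ) (h0 : Pp q i0 n = -1) : ∀ i : ℤ, Pp q i n = -1 := by
  obtain ⟨m, rfl⟩ : ∃ m, n = m + 3 := ⟨n - 3, by omega⟩
  have key : ∀ i : ℤ, Pp q (i+1) (m+3) = Pp q (i+1) (m+2) * Mm (q i) := by
    intro i
    rw [show m + 3 = (m+2) + 1 by omega, Pp_succ_right]
    rw [show i + 1 + ((m+2:ℕ):ℤ) = i + ((m+3:ℕ):ℤ) by push_cast; ring, hper i]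
  have keyl : ∀ i : ℤ, Pp q i (m+3) = Mm (q i) * Pp q (i+1) (m+2) := fun i => rfl
  have step_up : ∀ i : ℤ, Pp q i (m+3) = -1 → Pp q (i+1) (m+3) = -1 := by
    intro i h
    have : Mm (q i) * Pp q (i+1) (m+3) = -Mm (q i) := by
      rw [key i, ← mul_assoc, ← keyl i, h, neg_one_mul]
    calc Pp q (i+1) (m+3) = (Mminv (q i) * Mm (q i)) * Pp q (i+1) (m+3) := by
          rw [(Mminv_mul (q i)).1, one_mul]
      _ = Mminv (q i) * (Mm (q i) * Pp q (i+1) (m+3)) := by rw [mul_assoc]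
      _ = -1 := by rw [this, mul_neg, (Mminv_mul (q i)).1]
  have step_down : ∀ i : ℤ, Pp q (i+1) (m+3) = -1 → Pp q i (m+3) = -1 := by
    intro i h
    have h2 : Pp q (i+1) (m+2) = -Mminv (q i) := by
      calc Pp q (i+1) (m+2) = Pp q (i+1) (m+2) * (Mm (q i) * Mminv (q i)) := by
            rw [(Mminv_mul (q i)).2, mul_one]
        _ = (Pp q (i+1) (m+2) * Mm (q i)) * Mminv (q i) := by rw [mul_assoc]
        _ = -Mminv (q i) := by rw [← key i, h, neg_one_mul]
    rw [keyl i, h2, mul_neg, (Mminv_mul (q i)).2]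
  have main : ∀ t : ℤ, Pp q (i0 + t) (m+3) = -1 := by
    intro t
    induction t using Int.induction_on with
    | zero => simpa using h0
    | succ k ih => rw [show i0 + ((k:ℤ)+1) = (i0 + k) + 1 by ring]; exact step_up _ ih
    | pred k ih =>
        refine step_down _ ?_
        rw [show i0 + (-(k:ℤ)-1) + 1 = i0 + (-(k:ℤ)) by ring]
        exact ih
  intro i
  have := main (i - i0)
  rwa [show i0 + (i - i0) = i by ring] at this

theorem partI (n : ℕ) (hn : 3 ≤ n) (q : ℤ → ℤ) (hC : ClosurePos n q) :
    IsClosedFrieze n (fun i j : ℤ => if j ≤ i ∨ (i + n) < j then 0 else cc q i (j - i - 1).toNat) ∧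
    (∀ i : ℤ, (fun i j : ℤ => if j ≤ i ∨ (i + n) < j then 0 else cc q i (j - i - 1).toNat) i (i + 2)
      = q i) := by
  obtain ⟨hclo, hpos⟩ := hC
  have hw1 := window_one n q hn hclo
  have hw0 := window_zero n q hn hclo
  constructor
  · refine ⟨?_, ?_, ?_, ?_, ?_, ?_, ?_, ?_⟩
    · intro i; simp
    · intro i
      dsimp only
      rw [if_neg (by omega), show (i + 1 - i - 1).toNat = 0 by omega]
      exact cc_zero q i
    · intro i
      dsimp only
      rw [if_neg (by omega), show (i + n - 1 - i - 1).toNat = n - 2 by omega]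
      exact hw1 i
    · intro i
      dsimp only
      rw [if_neg (by omega), show (i + n - i - 1).toNat = n - 1 by omega]
      exact hw0 i
    · intro i j h1 h2
      dsimp only
      rw [if_neg (by omega)]
      exact hpos i (j - i - 1).toNat (by omega) (by omega)
    · intro i j h1 h2
      dsimp only
      rcases eq_or_lt_of_le h1 with h | h
      · subst h
        rw [if_neg (by omega), if_neg (by omega), if_neg (by omega), if_pos (by omega)]
        rw [show (i + 1 - i - 1).toNat = 0 by omega,
          show (i + 1 + 1 - (i+1) - 1).toNat = 0 by omega]
        rw [cc_zero, cc_zero]; ring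
      · set m : ℕ := (j - i - 2).toNat with hm
        have hj : j = i + 2 + m := by omega
        rw [if_neg (by omega), if_neg (by omega), if_neg (by omega), if_neg (by omega)]
        rw [show (j - i - 1).toNat = m + 1 by omega,
          show (j + 1 - (i+1) - 1).toNat = m + 1 by omega,
          show (j + 1 - i - 1).toNat = m + 2 by omega,
          show (j - (i+1) - 1).toNat = m by omega]
        exact diamond_c q i m
    · intro i j h; dsimp only; rw [if_pos (by omega)]
    · intro i j h; dsimp only; rw [if_pos (by omega)]
  · intro i
    dsimp only
    rw [if_neg (by omega), show (i + 2 - i - 1).toNat = 1 by omega]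
    exact cc_one q i

lemma cpos_all (n : ℕ) (q : ℤ → ℤ) (hn : 3 ≤ n) (hC : ClosurePos n q) :
    ∀ (i : ℤ) (ℓ : ℕ), ℓ + 2 ≤ n → 0 < cc q i ℓ := by
  intro i ℓ hl
  rcases Nat.eq_or_lt_of_le (Nat.zero_le ℓ) with h0 | h0
  · rw [← h0, cc_zero]; norm_num
  · rcases Nat.lt_or_ge (ℓ + 2) n with h1 | h1
    · exact hC.2 i ℓ (by omega) (by omega)
    · have : ℓ = n - 2 := by omega
      rw [this, window_one n q hn hC.1 i]; norm_num

lemma Pp_succ (q : ℤ → ℤ) (i : ℤ) (ℓ : ℕ) : Pp q i (ℓ+1) = Mm (q i) * Pp q (i+1) ℓ := rfl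

lemma MMM (x y : ℤ) : Mm (x+1) * Mm 1 * Mm (y+1) = Mm x * Mm y := by
  ext i j
  fin_cases i <;> fin_cases j <;>
    simp [Mm, Matrix.mul_apply, Fin.sum_univ_two] <;> ring

lemma bumpL (y : ℤ) (X : Mat) : (Mm (y+1) * X) 0 0 = (Mm y * X) 0 0 + X 0 0 := by
  simp [Mm, Matrix.mul_apply, Fin.sum_univ_two]; ring

lemma bumpR (x : ℤ) (X : Mat) : (X * Mm (x+1)) 0 0 = (X * Mm x) 0 0 + X 0 0 := by
  simp [Mm, Matrix.mul_apply, Fin.sum_univ_two]; ring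

lemma oneL (y : ℤ) (X : Mat) : (Mm 1 * (Mm (y+1) * X)) 0 0 = (Mm y * X) 0 0 := by
  rw [← mul_assoc]
  have : Mm 1 * Mm (y+1) = !![y, -1; y+1, -1] := by
    ext i j
    fin_cases i <;> fin_cases j <;> simp [Mm, Matrix.mul_apply, Fin.sum_univ_two]
  rw [this]
  simp [Mm, Matrix.mul_apply, Fin.sum_univ_two]

lemma oneR (x : ℤ) (X : Mat) : (X * Mm (x+1) * Mm 1) 0 0 = (X * Mm x) 0 0 := by
  rw [mul_assoc]
  have : Mm (x+1) * Mm 1 = !![x, -(x+1); 1, -1] := by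
    ext i j
    fin_cases i <;> fin_cases j <;> simp [Mm, Matrix.mul_apply, Fin.sum_univ_two] <;> ring
  rw [this]
  simp [Mm, Matrix.mul_apply, Fin.sum_univ_two]

lemma transfer (n : ℕ) (hn : 4 ≤ n) (q q' : ℤ → ℤ)
    (hqper : ∀ i : ℤ, q (i + n) = q i)
    (hq'per : ∀ i : ℤ, q' (i + (n-1:ℕ)) = q' i)
    (h0 : q 0 = q' 0 + 1)
    (hmid : ∀ k : ℤ, 1 ≤ k → k ≤ (n:ℤ) - 3 → q k = q' k)
    (hn2 : q ((n:ℤ) - 2) = q' ((n:ℤ) - 2) + 1)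
    (hlast : q ((n:ℤ) - 1) = 1)
    (hC : ClosurePos (n-1) q') : ClosurePos n q := by
  obtain ⟨m, rfl⟩ : ∃ m, n = m + 4 := ⟨n - 4, by omega⟩
  have hsub : (m + 4 - 1 : ℕ) = m + 3 := by omega
  rw [hsub] at hC hq'per
  have hclo' : ∀ i : ℤ, Pp q' i (m+3) = -1 := hC.1
  have cpos' : ∀ (i : ℤ) (ℓ : ℕ), ℓ + 2 ≤ m + 3 → 0 < cc q' i ℓ :=
    cpos_all (m+3) q' (by omega) hC
  -- pointwise values
  have hx : q ((m:ℤ)+2) = q' ((m:ℤ)+2) + 1 := by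
    rw [show (m:ℤ)+2 = ((m+4:ℕ):ℤ) - 2 by push_cast; ring]; exact hn2
  have h1 : q ((m:ℤ)+3) = 1 := by
    rw [show (m:ℤ)+3 = ((m+4:ℕ):ℤ) - 1 by push_cast; ring]; exact hlast
  have hy : q ((m:ℤ)+4) = q' 0 + 1 := by
    have := hqper 0; rw [zero_add] at this; push_cast at this; rw [this]; exact h0
  have hmid' : ∀ k : ℤ, 1 ≤ k → k ≤ (m:ℤ)+1 → q k = q' k := by
    intro k hk1 hk2; exact hmid k hk1 (by push_cast; omega)
  -- closure at starting point m+2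
  have key : Pp q ((m:ℤ)+2) (m+4) = -1 := by
    have e1 : Pp q ((m:ℤ)+2) (m+4) =
        Mm (q ((m:ℤ)+2)) * (Mm (q ((m:ℤ)+3)) * (Mm (q ((m:ℤ)+4)) * Pp q ((m:ℤ)+5) (m+1))) := by
      rw [show m+4 = (m+1)+1+1+1 by omega, Pp_succ, Pp_succ, Pp_succ,
        show (m:ℤ)+2+1 = (m:ℤ)+3 by ring, show (m:ℤ)+3+1 = (m:ℤ)+4 by ring,
        show (m:ℤ)+4+1 = (m:ℤ)+5 by ring]
    have e2 : Pp q ((m:ℤ)+5) (m+1) = Pp q' 1 (m+1) := by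
      have := Pp_period q (m+4) hqper (m+1) 1
      rw [show (1:ℤ) + ((m+4:ℕ):ℤ) = (m:ℤ)+5 by push_cast; ring] at this
      rw [this]
      exact Pp_congr q q' (m+1) 1 (fun k hk1 hk2 => hmid' k hk1 (by push_cast at hk2 ⊢; omega))
    have e3 : Pp q' ((m:ℤ)+2) (m+3) = Mm (q' ((m:ℤ)+2)) * (Mm (q' 0) * Pp q' 1 (m+1)) := by
      have hper0 : Pp q' ((m:ℤ)+3) (m+2) = Pp q' 0 (m+2) := by
        have := Pp_period q' (m+3) hq'per (m+2) 0
        rw [show (0:ℤ) + ((m+3:ℕ):ℤ) = (m:ℤ)+3 by push_cast; ring] at this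
        exact this
      rw [show m+3 = (m+2)+1 by omega, Pp_succ q' ((m:ℤ)+2) (m+2),
        show (m:ℤ)+2+1 = (m:ℤ)+3 by ring, hper0]
      rfl
    rw [e1, e2, hx, h1, hy]
    rw [show Mm (q' ((m:ℤ)+2) + 1) * (Mm 1 * (Mm (q' 0 + 1) * Pp q' 1 (m+1)))
        = (Mm (q' ((m:ℤ)+2) + 1) * Mm 1 * Mm (q' 0 + 1)) * Pp q' 1 (m+1) by
      rw [mul_assoc, mul_assoc]]
    rw [MMM, mul_assoc, ← e3]
    exact hclo' ((m:ℤ)+2)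
  have hclo : ∀ i : ℤ, Pp q i (m+4) = -1 :=
    closure_all (m+4) q (by omega) hqper ((m:ℤ)+2) key
  refine ⟨hclo, ?_⟩
  -- positivity
  intro i ℓ hl1 hl2
  have hmod := Pp_mod q (m+4) (by omega) hqper ℓ i
  have hmr : 0 ≤ i % ((m:ℤ)+4) ∧ i % ((m:ℤ)+4) < (m:ℤ)+4 := by
    constructor
    · exact Int.emod_nonneg i (by omega)
    · exact Int.emod_lt_of_pos i (by omega)
  unfold cc
  rw [show ((m+4:ℕ):ℤ) = (m:ℤ)+4 by push_cast; ring] at hmod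
  rw [hmod]
  obtain ⟨a, ha⟩ : ∃ a : ℕ, i % ((m:ℤ)+4) = (a:ℤ) := ⟨(i % ((m:ℤ)+4)).toNat, by omega⟩
  rw [ha]
  have han : a < m+4 := by omega
  rcases Nat.lt_or_ge (a + ℓ) (m+4) with hcase | hcase
  · -- case B : window inside [0, m+3)
    rcases Nat.eq_zero_or_pos a with ha0 | ha1
    · -- B2 : bump left
      subst ha0
      obtain ⟨ℓ', rfl⟩ : ∃ l', ℓ = l' + 1 := ⟨ℓ - 1, by omega⟩
      rw [show ((0:ℕ):ℤ) = (0:ℤ) by norm_num, Pp_succ, h0]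
      have e : Pp q (0+1) ℓ' = Pp q' 1 ℓ' := by
        rw [show (0:ℤ)+1 = 1 by ring]
        exact Pp_congr q q' ℓ' 1 (fun k hk1 hk2 => hmid' k hk1 (by push_cast at hk2 ⊢; omega))
      rw [e, bumpL]
      have r1 : Mm (q' 0) * Pp q' 1 ℓ' = Pp q' 0 (ℓ'+1) := by rw [Pp_succ]; norm_num
      rw [r1]
      have p1 : 0 < cc q' 0 (ℓ'+1) := cpos' 0 (ℓ'+1) (by omega)
      have p2 : 0 < cc q' 1 ℓ' := cpos' 1 ℓ' (by omega)
      unfold cc at p1 p2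
      omega
    · rcases Nat.lt_or_ge (a + ℓ) (m+3) with hcase2 | hcase2
      · -- B1 : pure
        have e : Pp q (a:ℤ) ℓ = Pp q' (a:ℤ) ℓ :=
          Pp_congr q q' ℓ a (fun k hk1 hk2 => hmid' k (by omega) (by push_cast at hk2 ⊢; omega))
        rw [e]
        exact cpos' a ℓ (by omega)
      · -- B3 : bump right, a + ℓ = m+3
        have hend : a + ℓ = m + 3 := by omega
        obtain ⟨ℓ', rfl⟩ : ∃ l', ℓ = l' + 1 := ⟨ℓ - 1, by omega⟩
        rw [Pp_succ_right]
        have e : Pp q (a:ℤ) ℓ' = Pp q' (a:ℤ) ℓ' :=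
          Pp_congr q q' ℓ' a (fun k hk1 hk2 => hmid' k (by omega) (by push_cast at hk2 ⊢; omega))
        have hidx : (a:ℤ) + (ℓ':ℕ) = (m:ℤ)+2 := by push_cast; omega
        rw [e, hidx, hx, bumpR]
        have r1 : Pp q' (a:ℤ) ℓ' * Mm (q' ((m:ℤ)+2)) = Pp q' (a:ℤ) (ℓ'+1) := by
          rw [Pp_succ_right, hidx]
        rw [r1]
        have p1 : 0 < cc q' a (ℓ'+1) := cpos' a (ℓ'+1) (by omega)
        have p2 : 0 < cc q' a ℓ' := cpos' a ℓ' (by omega)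
        unfold cc at p1 p2
        omega
  · -- case A : window contains m+3
    rcases Nat.eq_or_lt_of_le (Nat.le_of_lt_succ han) with ha3 | ha3
    · -- a = m+3 : the 1 is first
      rcases Nat.eq_or_lt_of_le hl1 with hl1' | hl1'
      · -- ℓ = 1
        rw [← hl1']
        have : Pp q (a:ℤ) 1 = Mm (q ((m:ℤ)+3)) := by
          rw [Pp_succ, show (a:ℤ) = (m:ℤ)+3 by push_cast; omega]
          show Mm _ * (1:Mat) = _
          rw [mul_one]
        rw [this, h1]
        norm_num [Mm]
      · -- ℓ ≥ 2 : oneL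
        obtain ⟨t, rfl⟩ : ∃ t, ℓ = t + 2 := ⟨ℓ - 2, by omega⟩
        rw [show t + 2 = (t+1)+1 by omega, Pp_succ, Pp_succ,
          show (a:ℤ) = (m:ℤ)+3 by push_cast; omega,
          show (m:ℤ)+3+1 = (m:ℤ)+4 by ring, show (m:ℤ)+4+1 = (m:ℤ)+5 by ring, h1, hy]
        have e2 : Pp q ((m:ℤ)+5) t = Pp q' 1 t := by
          have := Pp_period q (m+4) hqper t 1
          rw [show (1:ℤ) + ((m+4:ℕ):ℤ) = (m:ℤ)+5 by push_cast; ring] at this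
          rw [this]
          exact Pp_congr q q' t 1 (fun k hk1 hk2 => hmid' k hk1 (by push_cast at hk2 ⊢; omega))
        rw [e2, oneL]
        have r1 : Mm (q' 0) * Pp q' 1 t = Pp q' 0 (t+1) := by rw [Pp_succ, zero_add]
        rw [r1]
        exact cpos' 0 (t+1) (by omega)
    · -- a ≤ m+2
      have hp : a ≤ m + 2 := by omega
      rcases Nat.eq_or_lt_of_le hcase with heq | hgt
      · -- A2 : a + ℓ = m+4, 1 at end
        obtain ⟨ℓ', rfl⟩ : ∃ l', ℓ = l' + 2 := ⟨ℓ - 2, by omega⟩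
        rw [show ℓ' + 2 = (ℓ'+1)+1 by omega, Pp_succ_right, Pp_succ_right]
        have i1 : (a:ℤ) + (ℓ':ℕ) = (m:ℤ)+2 := by push_cast; omega
        have i2 : (a:ℤ) + ((ℓ'+1:ℕ):ℤ) = (m:ℤ)+3 := by push_cast; omega
        rw [i1, i2, hx, h1]
        have e : Pp q (a:ℤ) ℓ' = Pp q' (a:ℤ) ℓ' :=
          Pp_congr q q' ℓ' a (fun k hk1 hk2 => hmid' k (by omega) (by push_cast at hk2 ⊢; omega))
        rw [e, oneR]
        have r1 : Pp q' (a:ℤ) ℓ' * Mm (q' ((m:ℤ)+2)) = Pp q' (a:ℤ) (ℓ'+1) := by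
          rw [Pp_succ_right, i1]
        rw [r1]
        exact cpos' a (ℓ'+1) (by omega)
      · -- A3 : 1 strictly inside
        set p : ℕ := m + 3 - a with hpd
        set s : ℕ := a + ℓ - (m+5) with hsd
        have hdec : ℓ = (p - 1) + (s + 3) := by omega
        rw [hdec, Pp_concat]
        have i0 : (a:ℤ) + ((p-1:ℕ):ℤ) = (m:ℤ)+2 := by push_cast [hpd]; omega
        rw [i0]
        rw [show s + 3 = (s+1+1)+1 by omega, Pp_succ,
          show s+1+1 = (s+1)+1 by omega, Pp_succ, Pp_succ]
        rw [show (m:ℤ)+2+1 = (m:ℤ)+3 by ring, show (m:ℤ)+3+1 = (m:ℤ)+4 by ring,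
          show (m:ℤ)+4+1 = (m:ℤ)+5 by ring]
        rw [hx, h1, hy]
        have e2 : Pp q ((m:ℤ)+5) s = Pp q' 1 s := by
          have := Pp_period q (m+4) hqper s 1
          rw [show (1:ℤ) + ((m+4:ℕ):ℤ) = (m:ℤ)+5 by push_cast; ring] at this
          rw [this]
          exact Pp_congr q q' s 1 (fun k hk1 hk2 => hmid' k hk1 (by push_cast at hk2 ⊢; omega))
        have e1 : Pp q (a:ℤ) (p-1) = Pp q' (a:ℤ) (p-1) :=
          Pp_congr q q' (p-1) a (fun k hk1 hk2 => hmid' k (by omega) (by push_cast [hpd] at hk2 ⊢; omega))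
        rw [e1, e2]
        have hq'0 : q' ((m:ℤ)+3) = q' 0 := by
          have := hq'per 0
          rw [show (0:ℤ) + ((m+3:ℕ):ℤ) = (m:ℤ)+3 by push_cast; ring] at this
          exact this
        have hpers : Pp q' ((m:ℤ)+3+1) s = Pp q' 1 s := by
          have := Pp_period q' (m+3) hq'per s 1
          rw [show (1:ℤ) + ((m+3:ℕ):ℤ) = (m:ℤ)+3+1 by push_cast; ring] at this
          exact this
        have emid : Mm (q' ((m:ℤ)+2) + 1) * (Mm 1 * (Mm (q' 0 + 1) * Pp q' 1 s))
            = Pp q' ((m:ℤ)+2) (s+2) := by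
          rw [show Mm (q' ((m:ℤ)+2) + 1) * (Mm 1 * (Mm (q' 0 + 1) * Pp q' 1 s))
              = (Mm (q' ((m:ℤ)+2) + 1) * Mm 1 * Mm (q' 0 + 1)) * Pp q' 1 s by
            rw [mul_assoc, mul_assoc]]
          rw [MMM, mul_assoc]
          rw [show s+2 = (s+1)+1 by omega, Pp_succ, show (m:ℤ)+2+1 = (m:ℤ)+3 by ring,
            Pp_succ, hpers, hq'0]
        rw [emid]
        have r1 := Pp_concat q' (p-1) (a:ℤ) (s+2)
        rw [i0] at r1
        rw [← r1]
        exact cpos' a ((p-1)+(s+2)) (by omega)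

lemma noncross_bound : ∀ (N : ℕ) (A : Finset ℕ) (S : Finset (ℕ × ℕ)),
    A.card ≤ N →
    (∀ e ∈ S, e.1 ∈ A ∧ e.2 ∈ A) →
    (∀ e ∈ S, ∃ k ∈ A, e.1 < k ∧ k < e.2) →
    (∀ e ∈ S, ∃ k ∈ A, k < e.1 ∨ e.2 < k) →
    (∀ e ∈ S, ∀ f ∈ S, ¬(e.1 < f.1 ∧ f.1 < e.2 ∧ e.2 < f.2)) →
    S.Nonempty → S.card + 3 ≤ A.card := by
  intro N
  induction N with
  | zero =>
      intro A S hA hmem hbet hout hcr hne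
      obtain ⟨e, he⟩ := hne
      obtain ⟨k, hk, _⟩ := hbet e he
      have : 0 < A.card := Finset.card_pos.2 ⟨k, hk⟩
      omega
  | succ N ih =>
      intro A S hA hmem hbet hout hcr hne
      obtain ⟨e0, he0, hmin⟩ := S.exists_min_image (fun e => e.2 - e.1) hne
      set p := e0.1 with hp
      set qq := e0.2 with hqq
      obtain ⟨k0, hk0A, hk0l, hk0r⟩ := hbet e0 he0
      have hlt : ∀ f ∈ S, f.1 < f.2 := by
        intro f hf
        obtain ⟨k, _, h1, h2⟩ := hbet f hf
        omega
      have hpq : p < qq := hlt e0 he0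
      have claim : ∀ f ∈ S, f ≠ e0 →
          ¬(p < f.1 ∧ f.1 < qq) ∧ ¬(p < f.2 ∧ f.2 < qq) := by
        intro f hf hfe
        have hf12 := hlt f hf
        have hspan := hmin f hf
        constructor
        · rintro ⟨h1, h2⟩
          rcases Nat.lt_or_ge qq f.2 with h3 | h3
          · exact hcr e0 he0 f hf ⟨h1, h2, h3⟩
          · omega
        · rintro ⟨h1, h2⟩
          rcases Nat.lt_or_ge f.1 p with h3 | h3
          · exact hcr f hf e0 he0 ⟨h3, h1, h2⟩
          · omega
      set A' := A.filter (fun x => ¬(p < x ∧ x < qq)) with hA'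
      set S' := S.erase e0 with hS'
      have hAsub : A' ⊆ A := Finset.filter_subset _ _
      have hk0A' : k0 ∉ A' := by
        rw [hA', Finset.mem_filter]
        push_neg
        intro _
        exact ⟨hk0l, hk0r⟩
      have hcard' : A'.card < A.card :=
        Finset.card_lt_card ⟨hAsub, fun hsub => hk0A' (hsub hk0A)⟩
      have hpA : p ∈ A := (hmem e0 he0).1
      have hqA : qq ∈ A := (hmem e0 he0).2
      have hpA' : p ∈ A' := by
        rw [hA', Finset.mem_filter]
        exact ⟨hpA, by omega⟩
      have hqA' : qq ∈ A' := by
        rw [hA', Finset.mem_filter]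
        exact ⟨hqA, by omega⟩
      have hmem' : ∀ e ∈ S', e.1 ∈ A' ∧ e.2 ∈ A' := by
        intro f hf
        have hfS := Finset.mem_of_mem_erase hf
        have hfe := Finset.ne_of_mem_erase hf
        obtain ⟨c1, c2⟩ := claim f hfS hfe
        rw [hA', Finset.mem_filter, Finset.mem_filter]
        exact ⟨⟨(hmem f hfS).1, c1⟩, ⟨(hmem f hfS).2, c2⟩⟩
      have hbet' : ∀ e ∈ S', ∃ k ∈ A', e.1 < k ∧ k < e.2 := by
        intro f hf
        have hfS := Finset.mem_of_mem_erase hf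
        have hfe := Finset.ne_of_mem_erase hf
        obtain ⟨c1, c2⟩ := claim f hfS hfe
        obtain ⟨k, hkA, hk1, hk2⟩ := hbet f hfS
        rcases Classical.em (p < k ∧ k < qq) with hin | hout2
        · -- k inside the forbidden zone
          have hf1 : f.1 ≤ p := by omega
          have hf2 : qq ≤ f.2 := by omega
          rcases Nat.lt_or_ge f.1 p with h3 | h3
          · exact ⟨p, hpA', h3, by omega⟩
          · have hf1p : f.1 = p := by omega
            have hf2q : f.2 ≠ qq := by
              intro hc
              exact hfe (Prod.ext (by omega) hc)
            exact ⟨qq, hqA', by omega, by omega⟩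
        · refine ⟨k, ?_, hk1, hk2⟩
          rw [hA', Finset.mem_filter]
          exact ⟨hkA, hout2⟩
      have hout' : ∀ e ∈ S', ∃ k ∈ A', k < e.1 ∨ e.2 < k := by
        intro f hf
        have hfS := Finset.mem_of_mem_erase hf
        have hfe := Finset.ne_of_mem_erase hf
        obtain ⟨c1, c2⟩ := claim f hfS hfe
        obtain ⟨k, hkA, hk⟩ := hout f hfS
        rcases Classical.em (p < k ∧ k < qq) with hin | hout2
        · rcases hk with hk | hk
          · refine ⟨p, hpA', Or.inl ?_⟩
            omega
          · refine ⟨qq, hqA', Or.inr ?_⟩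
            omega
        · refine ⟨k, ?_, hk⟩
          rw [hA', Finset.mem_filter]
          exact ⟨hkA, hout2⟩
      have hcr' : ∀ e ∈ S', ∀ f ∈ S', ¬(e.1 < f.1 ∧ f.1 < e.2 ∧ e.2 < f.2) :=
        fun e he f hf => hcr e (Finset.mem_of_mem_erase he) f (Finset.mem_of_mem_erase hf)
      have hScard : S'.card + 1 = S.card := Finset.card_erase_add_one he0
      rcases Finset.eq_empty_or_nonempty S' with hS'e | hS'ne
      · -- S = {e0}
        have hS1 : S.card = 1 := by
          rw [← hScard, hS'e]
          simp
        obtain ⟨k1, hk1A, hk1o⟩ := hout e0 he0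
        have hsub4 : ({p, k0, qq, k1} : Finset ℕ) ⊆ A := by
          intro x hx
          simp only [Finset.mem_insert, Finset.mem_singleton] at hx
          rcases hx with rfl | rfl | rfl | rfl
          · exact hpA
          · exact hk0A
          · exact hqA
          · exact hk1A
        have hc4 : ({p, k0, qq, k1} : Finset ℕ).card = 4 := by
          rw [Finset.card_insert_of_notMem (by simp; omega),
            Finset.card_insert_of_notMem (by simp; omega),
            Finset.card_insert_of_notMem (by simp; omega), Finset.card_singleton]
        have := Finset.card_le_card hsub4
        omega
      · have := ih A' S' (by omega) hmem' hbet' hout' hcr' hS'ne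
        omega

lemma exists_ear (n : ℕ) [NeZero n] (hn : 4 ≤ n) (T : PolygonTriangulation n) :
    ∃ d ∈ T.diags, d.2.val = d.1.val + 2 := by
  by_contra h
  push_neg at h
  have hne : T.diags.Nonempty := by
    rw [← Finset.card_pos, T.card_diags]
    omega
  obtain ⟨d0, hd0, hmin⟩ := T.diags.exists_min_image (fun d => d.2.val - d.1.val) hne
  set p := d0.1.val with hp
  set qq := d0.2.val with hqq
  have hblt := (T.not_boundary d0 hd0).1
  have hbwrap := (T.not_boundary d0 hd0).2
  have hqlt : qq < n := ZMod.val_lt d0.2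
  have hg3 : p + 3 ≤ qq := by
    have := h d0 hd0
    omega
  have hvals : ∀ e ∈ T.diags, e.1.val < e.2.val ∧ e.2.val < n :=
    fun e he => ⟨T.lt_of_mem e he, ZMod.val_lt e.2⟩
  have valinj : ∀ e ∈ T.diags, e.1.val = p → e.2.val = qq → e = d0 := by
    intro e he h1 h2
    have e1 : e.1 = d0.1 := ZMod.val_injective n h1
    have e2 : e.2 = d0.2 := ZMod.val_injective n h2
    exact Prod.ext e1 e2
  have claim : ∀ e ∈ T.diags, e ≠ d0 →
      ¬(p < e.1.val ∧ e.1.val < qq) ∧ ¬(p < e.2.val ∧ e.2.val < qq) := by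
    intro e he hee
    have he12 := T.lt_of_mem e he
    have hspan := hmin e he
    constructor
    · rintro ⟨h1, h2⟩
      rcases Nat.lt_or_ge qq e.2.val with h3 | h3
      · exact T.noncrossing d0 hd0 e he ⟨h1, h2, h3⟩
      · omega
    · rintro ⟨h1, h2⟩
      rcases Nat.lt_or_ge e.1.val p with h3 | h3
      · exact T.noncrossing e he d0 hd0 ⟨h3, h1, h2⟩
      · omega
  set A : Finset ℕ := (Finset.range n).filter (fun x => ¬(p < x ∧ x < qq)) with hA
  set S : Finset (ℕ × ℕ) := (T.diags.erase d0).image (fun d => (d.1.val, d.2.val)) with hS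
  have hinj : Set.InjOn (fun d : ZMod n × ZMod n => (d.1.val, d.2.val)) (T.diags.erase d0) := by
    intro a _ b _ hab
    simp only [Prod.mk.injEq] at hab
    exact Prod.ext (ZMod.val_injective n hab.1) (ZMod.val_injective n hab.2)
  have hScard : S.card = n - 4 := by
    rw [hS, Finset.card_image_of_injOn hinj, Finset.card_erase_of_mem hd0, T.card_diags]
    omega
  have hSne : S.Nonempty := by
    rw [← Finset.card_pos, hScard]
    omega
  have hpre : ∀ e ∈ S, ∃ d, d ∈ T.diags ∧ d ≠ d0 ∧ e = (d.1.val, d.2.val) := by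
    intro e he
    rw [hS, Finset.mem_image] at he
    obtain ⟨d, hd, hde⟩ := he
    exact ⟨d, Finset.mem_of_mem_erase hd, Finset.ne_of_mem_erase hd, hde.symm⟩
  have hmem : ∀ e ∈ S, e.1 ∈ A ∧ e.2 ∈ A := by
    intro e he
    obtain ⟨d, hd, hdne, rfl⟩ := hpre e he
    obtain ⟨c1, c2⟩ := claim d hd hdne
    obtain ⟨hd12, hd2n⟩ := hvals d hd
    rw [hA, Finset.mem_filter, Finset.mem_filter, Finset.mem_range, Finset.mem_range]
    exact ⟨⟨by omega, c1⟩, ⟨by omega, c2⟩⟩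
  have hbet : ∀ e ∈ S, ∃ k ∈ A, e.1 < k ∧ k < e.2 := by
    intro e he
    obtain ⟨d, hd, hdne, rfl⟩ := hpre e he
    obtain ⟨c1, c2⟩ := claim d hd hdne
    obtain ⟨hd12, hd2n⟩ := hvals d hd
    have hnb := (T.not_boundary d hd).1
    rcases Classical.em (p < d.1.val + 1 ∧ d.1.val + 1 < qq) with hin | hout
    · have h1p : d.1.val = p := by omega
      have h2q : qq ≤ d.2.val := by omega
      have : d.2.val ≠ qq := by
        intro hc
        exact hdne (valinj d hd h1p hc)
      refine ⟨qq, ?_, by omega, by omega⟩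
      rw [hA, Finset.mem_filter, Finset.mem_range]
      exact ⟨by omega, by omega⟩
    · refine ⟨d.1.val + 1, ?_, by omega, by omega⟩
      rw [hA, Finset.mem_filter, Finset.mem_range]
      exact ⟨by omega, hout⟩
  have hout : ∀ e ∈ S, ∃ k ∈ A, k < e.1 ∨ e.2 < k := by
    intro e he
    obtain ⟨d, hd, hdne, rfl⟩ := hpre e he
    obtain ⟨hd12, hd2n⟩ := hvals d hd
    have hnb := (T.not_boundary d hd).2
    rcases Nat.eq_zero_or_pos d.1.val with h1 | h1
    · have h2 : d.2.val ≠ n - 1 := fun hc => hnb ⟨h1, hc⟩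
      refine ⟨n - 1, ?_, Or.inr (by omega)⟩
      rw [hA, Finset.mem_filter, Finset.mem_range]
      exact ⟨by omega, by omega⟩
    · refine ⟨0, ?_, Or.inl (by omega)⟩
      rw [hA, Finset.mem_filter, Finset.mem_range]
      exact ⟨by omega, by omega⟩
  have hcr : ∀ e ∈ S, ∀ f ∈ S, ¬(e.1 < f.1 ∧ f.1 < e.2 ∧ e.2 < f.2) := by
    intro e he f hf hc
    obtain ⟨d, hd, _, rfl⟩ := hpre e he
    obtain ⟨dd, hdd, _, rfl⟩ := hpre f hf
    exact T.noncrossing d hd dd hdd hc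
  have hbound := noncross_bound A.card A S le_rfl hmem hbet hout hcr hSne
  have hAcard : A.card ≤ n - 2 := by
    have hsub : A ⊆ ((Finset.range n).erase (p+1)).erase (p+2) := by
      intro x hx
      rw [hA, Finset.mem_filter] at hx
      rw [Finset.mem_erase, Finset.mem_erase]
      refine ⟨?_, ?_, hx.1⟩ <;> · intro hc; subst hc; exact hx.2 (by omega)
    have := Finset.card_le_card hsub
    rw [Finset.card_erase_of_mem, Finset.card_erase_of_mem, Finset.card_range] at this
    · omega
    · rw [Finset.mem_range]; omega
    · rw [Finset.mem_erase, Finset.mem_range]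
      exact ⟨by omega, by omega⟩
  omega

lemma zmod_cast_val {m : ℕ} [NeZero m] (a : ZMod m) : ((a.val : ℕ) : ZMod m) = a :=
  (ZMod.natCast_val a).trans (ZMod.cast_id m a)

lemma zmod_val_succ_eq {m : ℕ} [NeZero m] {a b : ZMod m} (h : b.val = a.val + 1) : b = a + 1 := by
  calc b = ((b.val : ℕ) : ZMod m) := (zmod_cast_val b).symm
    _ = ((a.val + 1 : ℕ) : ZMod m) := by rw [h]
    _ = a + 1 := by push_cast [zmod_cast_val]; ring

lemma zmod_wrap {m : ℕ} [NeZero m] {a b : ZMod m} (h1 : a.val = m - 1) (h2 : b.val = 0) :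
    b = a + 1 := by
  have hm : 0 < m := Nat.pos_of_ne_zero (NeZero.ne m)
  calc b = ((b.val : ℕ) : ZMod m) := (zmod_cast_val b).symm
    _ = ((a.val + 1 : ℕ) : ZMod m) := by
        rw [h1, h2, show m - 1 + 1 = m by omega]
        simp [ZMod.natCast_self]
    _ = a + 1 := by push_cast [zmod_cast_val]; ring

lemma zmod_succ_val {m : ℕ} [NeZero m] (u : ZMod m) :
    (u+1).val = u.val + 1 ∨ (u.val = m - 1 ∧ (u+1).val = 0) := by
  have hm : 0 < m := Nat.pos_of_ne_zero (NeZero.ne m)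
  have hu : u.val < m := ZMod.val_lt u
  have h : (u+1).val = (u.val + 1) % m := by
    rw [← Nat.cast_one (R := ZMod m), ← zmod_cast_val u, ← Nat.cast_add, ZMod.val_natCast,
      ZMod.val_cast_of_lt hu]
  rcases Nat.lt_or_ge (u.val + 1) m with h1 | h1
  · left; rw [h, Nat.mod_eq_of_lt h1]
  · right
    constructor
    · omega
    · rw [h, show u.val + 1 = m by omega, Nat.mod_self]

set_option maxHeartbeats 1600000 in
lemma step (n : ℕ) [NeZero n] [NeZero (n-1)] (hn : 4 ≤ n) (T : PolygonTriangulation n) :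
    ∃ (T' : PolygonTriangulation (n-1)) (W : ℕ), 1 ≤ W ∧ W + 2 ≤ n ∧
      triCount T ((W : ℕ) : ZMod n) = 1 ∧
      ∀ u : ℕ, u < n → u ≠ W →
        (triCount T ((u : ℕ) : ZMod n) : ℤ) =
          (triCount T' (((if u < W then u else u - 1) : ℕ) : ZMod (n-1)) : ℤ) +
          (if u = W - 1 ∨ u = W + 1 then 1 else 0) := by
  obtain ⟨d0, hd0, hear⟩ := exists_ear n hn T
  obtain ⟨P, Q⟩ := d0
  dsimp only at hd0 hear ⊢
  have hlt0 : P.val < Q.val := T.lt_of_mem (P, Q) hd0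
  have hncA : ∀ e ∈ T.diags, ¬(P.val < e.1.val ∧ e.1.val < Q.val ∧ Q.val < e.2.val) :=
    fun e he => T.noncrossing (P, Q) hd0 e he
  have hncB : ∀ e ∈ T.diags, ¬(e.1.val < P.val ∧ P.val < e.2.val ∧ e.2.val < Q.val) :=
    fun e he => T.noncrossing e he (P, Q) hd0
  set W := P.val + 1 with hWdef
  have hQn : Q.val < n := ZMod.val_lt Q
  have hQval : Q.val = W + 1 := by omega
  have hPval : P.val = W - 1 := by omega
  have hWn : W + 2 ≤ n := by omega
  set w : ZMod n := ((W : ℕ) : ZMod n) with hwdef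
  have hwval : w.val = W := ZMod.val_cast_of_lt (by omega)
  have hPw : P ≠ w := fun hc => by rw [hc] at hPval; omega
  have hQw : Q ≠ w := fun hc => by rw [hc] at hQval; omega
  have hPQ : P ≠ Q := fun hc => by rw [hc] at hPval; omega
  have hwP : w = P + 1 := zmod_val_succ_eq (by omega)
  have hQw1 : Q = w + 1 := zmod_val_succ_eq (by omega)
  have hwfree : ∀ e ∈ T.diags, e.1 ≠ w ∧ e.2 ≠ w := by
    intro e he
    have he12 := T.lt_of_mem e he
    have henb := (T.not_boundary e he).1
    constructor
    · intro hc
      have h1 : e.1.val = W := by rw [hc, hwval]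
      exact hncA e he ⟨by omega, by omega, by omega⟩
    · intro hc
      have h2 : e.2.val = W := by rw [hc, hwval]
      exact hncB e he ⟨by omega, by omega, by omega⟩
  -- the triangle {P, w, Q}
  have hcard3 : ({P, w, Q} : Finset (ZMod n)).card = 3 := by
    rw [Finset.card_insert_of_notMem (by simp [hPw, hPQ]),
      Finset.card_insert_of_notMem (by simpa using (Ne.symm hQw : w ≠ Q)),
      Finset.card_singleton]
  have htri : ({P, w, Q} : Finset (ZMod n)) ∈ triangles T := by
    rw [triangles, Finset.mem_filter]
    refine ⟨Finset.mem_univ _, hcard3, ?_⟩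
    intro i hi j hj hij
    simp only [Finset.mem_insert, Finset.mem_singleton] at hi hj
    have hPQd : (P, Q) ∈ T.diags := hd0
    rcases hi with rfl | rfl | rfl <;> rcases hj with rfl | rfl | rfl
    · exact absurd rfl hij
    · exact Or.inr (Or.inr (Or.inl hwP))
    · exact Or.inl hPQd
    · exact Or.inr (Or.inr (Or.inr hwP))
    · exact absurd rfl hij
    · exact Or.inr (Or.inr (Or.inl hQw1))
    · exact Or.inr (Or.inl hPQd)
    · exact Or.inr (Or.inr (Or.inr hQw1))
    · exact absurd rfl hij
  have huniq : ∀ s ∈ triangles T, w ∈ s → s = {P, w, Q} := by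
    intro s hs hws
    rw [triangles, Finset.mem_filter] at hs
    obtain ⟨-, hcard, hedges⟩ := hs
    have hsub : s ⊆ {P, w, Q} := by
      intro x hx
      rcases Classical.em (x = w) with rfl | hxw
      · simp
      · have hedge := hedges x hx w hws hxw
        rcases hedge with hd | hd | hd | hd
        · exact absurd rfl ((hwfree (x, w) hd).2)
        · exact absurd rfl ((hwfree (w, x) hd).1)
        · -- w = x + 1, and w = P + 1, so x = P
          have : x = P := by
            have := hd.symm.trans hwP
            exact add_right_cancel this
          simp [this]
        · -- x = w + 1 = Q
          have : x = Q := by rw [hd, ← hQw1]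
          simp [this]
    exact Finset.eq_of_subset_of_card_le hsub (by omega)
  have htcw : triCount T w = 1 := by
    rw [triCount]
    have : (triangles T).filter (fun s => w ∈ s) = {({P, w, Q} : Finset (ZMod n))} := by
      ext s
      rw [Finset.mem_filter, Finset.mem_singleton]
      constructor
      · rintro ⟨h1, h2⟩
        exact huniq s h1 h2
      · rintro rfl
        exact ⟨htri, by simp⟩
    rw [this, Finset.card_singleton]
  -- the collapsing map φ and its inverse ψ
  set φ : ZMod n → ZMod (n-1) :=
    fun v => (((if v.val < W then v.val else v.val - 1) : ℕ) : ZMod (n-1)) with hφdef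
  have hφval : ∀ v : ZMod n, (φ v).val = if v.val < W then v.val else v.val - 1 := by
    intro v
    have hv : v.val < n := ZMod.val_lt v
    rw [hφdef]
    dsimp only
    rcases Nat.lt_or_ge v.val W with h | h
    · rw [if_pos h, ZMod.val_cast_of_lt (by omega)]
    · rw [if_neg (by omega), ZMod.val_cast_of_lt (by omega)]
  have hvalW : ∀ v : ZMod n, v ≠ w → v.val ≠ W :=
    fun v hv hc => hv (ZMod.val_injective n (by rw [hc, hwval]))
  have hφinj : ∀ u v : ZMod n, u ≠ w → v ≠ w → φ u = φ v → u = v := by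
    intro u v hu hv he
    have h1 := hφval u
    have h2 := hφval v
    rw [he] at h1
    have hu' := hvalW u hu
    have hv' := hvalW v hv
    have hun : u.val < n := ZMod.val_lt u
    have hvn : v.val < n := ZMod.val_lt v
    have h3 := h1.symm.trans h2
    apply ZMod.val_injective n
    split_ifs at h3 <;> omega
  have hφP : (φ P).val = W - 1 := by rw [hφval, if_pos (by omega), hPval]
  have hφQ : (φ Q).val = W := by rw [hφval, if_neg (by omega), hQval]; omega
  -- construct the smaller triangulation
  set D' : Finset (ZMod (n-1) × ZMod (n-1)) :=
    (T.diags.erase (P, Q)).image (fun d => (φ d.1, φ d.2)) with hD'def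
  have hpre' : ∀ e ∈ D', ∃ d, d ∈ T.diags ∧ d ≠ (P, Q) ∧ e = (φ d.1, φ d.2) := by
    intro e he
    rw [hD'def, Finset.mem_image] at he
    obtain ⟨d, hd, hde⟩ := he
    exact ⟨d, Finset.mem_of_mem_erase hd, Finset.ne_of_mem_erase hd, hde.symm⟩
  have hdfacts : ∀ d, d ∈ T.diags → d ≠ (P, Q) →
      d.1.val < d.2.val ∧ d.1.val + 1 < d.2.val ∧ d.1.val ≠ W ∧ d.2.val ≠ W ∧
      d.2.val < n ∧ ¬(d.1.val = 0 ∧ d.2.val = n - 1) ∧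
      ¬(d.1.val = W - 1 ∧ d.2.val = W + 1) := by
    intro d hd hdne
    have h1 := T.lt_of_mem d hd
    have h2 := (T.not_boundary d hd).1
    have h3 := (T.not_boundary d hd).2
    have h4 := hwfree d hd
    refine ⟨h1, h2, hvalW d.1 h4.1, hvalW d.2 h4.2, ZMod.val_lt d.2, h3, ?_⟩
    rintro ⟨ha, hb⟩
    apply hdne
    have e1 : d.1 = P := ZMod.val_injective n (by omega)
    have e2 : d.2 = Q := ZMod.val_injective n (by omega)
    rw [← e1, ← e2]
  have hT' : ∃ T' : PolygonTriangulation (n-1), T'.diags = D' := by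
    refine ⟨⟨D', ?_, ?_, ?_, ?_⟩, rfl⟩
    · intro e he
      obtain ⟨d, hd, hdne, rfl⟩ := hpre' e he
      obtain ⟨f1, f2, f3, f4, f5, f6, f7⟩ := hdfacts d hd hdne
      dsimp only
      rw [hφval, hφval]
      split_ifs <;> omega
    · intro e he
      obtain ⟨d, hd, hdne, rfl⟩ := hpre' e he
      obtain ⟨f1, f2, f3, f4, f5, f6, f7⟩ := hdfacts d hd hdne
      dsimp only
      constructor
      · rw [hφval, hφval]
        split_ifs <;> omega
      · rintro ⟨h1, h2⟩
        rw [hφval] at h1 h2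
        split_ifs at h1 h2 <;> exact f6 ⟨by omega, by omega⟩
    · intro e he f hf
      obtain ⟨d, hd, hdne, rfl⟩ := hpre' e he
      obtain ⟨dd, hdd, hddne, rfl⟩ := hpre' f hf
      obtain ⟨f1, f2, f3, f4, f5, f6, f7⟩ := hdfacts d hd hdne
      obtain ⟨g1, g2, g3, g4, g5, g6, g7⟩ := hdfacts dd hdd hddne
      dsimp only
      rintro ⟨c1, c2, c3⟩
      rw [hφval, hφval] at c1 c2 c3
      split_ifs at c1 c2 c3 <;>
        exact T.noncrossing d hd dd hdd ⟨by omega, by omega, by omega⟩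
    · rw [hD'def, Finset.card_image_of_injOn, Finset.card_erase_of_mem hd0,
        T.card_diags]
      · omega
      · intro a ha b hb hab
        have haT := Finset.mem_of_mem_erase ha
        have hbT := Finset.mem_of_mem_erase hb
        simp only [Prod.mk.injEq] at hab
        exact Prod.ext
          (hφinj a.1 b.1 (hwfree a haT).1 (hwfree b hbT).1 hab.1)
          (hφinj a.2 b.2 (hwfree a haT).2 (hwfree b hbT).2 hab.2)
  obtain ⟨T', hT'd⟩ := hT'
  set ψ : ZMod (n-1) → ZMod n :=
    fun x => (((if x.val < W then x.val else x.val + 1) : ℕ) : ZMod n) with hψdef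
  have hψval : ∀ x : ZMod (n-1), (ψ x).val = if x.val < W then x.val else x.val + 1 := by
    intro x
    have hx : x.val < n - 1 := ZMod.val_lt x
    rw [hψdef]
    dsimp only
    rcases Nat.lt_or_ge x.val W with h | h
    · rw [if_pos h, ZMod.val_cast_of_lt (by omega)]
    · rw [if_neg (by omega), ZMod.val_cast_of_lt (by omega)]
  have hψw : ∀ x : ZMod (n-1), ψ x ≠ w := by
    intro x hc
    have := hψval x
    rw [hc, hwval] at this
    have hx : x.val < n - 1 := ZMod.val_lt x
    split_ifs at this <;> omega
  have hφψ : ∀ x : ZMod (n-1), φ (ψ x) = x := by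
    intro x
    apply ZMod.val_injective (n-1)
    rw [hφval, hψval]
    have hx : x.val < n - 1 := ZMod.val_lt x
    split_ifs <;> omega
  have hψφ : ∀ v : ZMod n, v ≠ w → ψ (φ v) = v := by
    intro v hv
    apply ZMod.val_injective n
    rw [hψval, hφval]
    have hvn : v.val < n := ZMod.val_lt v
    have := hvalW v hv
    split_ifs <;> omega
  -- edge correspondence
  have fwd : ∀ u v : ZMod n, u ≠ w → v ≠ w →
      ((u, v) ∈ T.diags ∨ v = u + 1) → IsTriEdge T' (φ u) (φ v) := by
    intro u v hu hv h
    have hun : u.val < n := ZMod.val_lt u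
    have hvn : v.val < n := ZMod.val_lt v
    have huW := hvalW u hu
    have hvW := hvalW v hv
    rcases h with h | h
    · rcases Classical.em ((u, v) = ((P : ZMod n), Q)) with heq | hne2
      · have h1 : u = P := congrArg Prod.fst heq
        have h2 : v = Q := congrArg Prod.snd heq
        subst h1; subst h2
        refine Or.inr (Or.inr (Or.inl ?_))
        exact zmod_val_succ_eq (by omega)
      · refine Or.inl ?_
        rw [hT'd, hD'def, Finset.mem_image]
        exact ⟨(u, v), Finset.mem_erase.2 ⟨hne2, h⟩, rfl⟩
    · refine Or.inr (Or.inr (Or.inl ?_))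
      rcases zmod_succ_val u with hs | ⟨h1, h2⟩
      · rw [← h] at hs
        apply zmod_val_succ_eq
        rw [hφval, hφval]
        split_ifs <;> omega
      · rw [← h] at h2
        exact zmod_wrap (by rw [hφval]; split_ifs <;> omega)
          (by rw [hφval]; split_ifs <;> omega)
  have bwd : ∀ u v : ZMod n, u ≠ w → v ≠ w →
      (((φ u), (φ v)) ∈ T'.diags ∨ φ v = φ u + 1) → ((u, v) ∈ T.diags ∨ v = u + 1) := by
    intro u v hu hv h
    have hun : u.val < n := ZMod.val_lt u
    have hvn : v.val < n := ZMod.val_lt v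
    have huW := hvalW u hu
    have hvW := hvalW v hv
    rcases h with h | h
    · rw [hT'd] at h
      obtain ⟨d, hd, hdne, hde⟩ := hpre' _ h
      have hdT := hd
      have hfree := hwfree d hd
      simp only [Prod.mk.injEq] at hde
      have e1 : d.1 = u := hφinj d.1 u hfree.1 hu hde.1.symm
      have e2 : d.2 = v := hφinj d.2 v hfree.2 hv hde.2.symm
      left
      rw [← e1, ← e2]
      exact hd
    · rcases zmod_succ_val (φ u) with hs | ⟨h1, h2⟩
      · rw [← h] at hs
        have e1 := hφval u
        have e2 := hφval v
        have hcase : v.val = u.val + 1 ∨ (u.val = W - 1 ∧ v.val = W + 1) := by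
          rw [e1, e2] at hs
          split_ifs at hs <;> omega
        rcases hcase with hc | ⟨hc1, hc2⟩
        · exact Or.inr (zmod_val_succ_eq hc)
        · left
          have eu : u = P := ZMod.val_injective n (by omega)
          have ev : v = Q := ZMod.val_injective n (by omega)
          rw [eu, ev]
          exact hd0
      · rw [← h] at h2
        have e1 := hφval u
        have e2 := hφval v
        rw [e1] at h1
        rw [e2] at h2
        have hu1 : u.val = n - 1 := by
          split_ifs at h1 <;> omega
        have hv1 : v.val = 0 := by
          split_ifs at h2 <;> omega
        exact Or.inr (zmod_wrap hu1 hv1)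
  have hedge : ∀ u v : ZMod n, u ≠ w → v ≠ w →
      (IsTriEdge T u v ↔ IsTriEdge T' (φ u) (φ v)) := by
    intro u v hu hv
    constructor
    · intro h
      rcases h with h | h | h | h
      · exact fwd u v hu hv (Or.inl h)
      · have := fwd v u hv hu (Or.inl h)
        unfold IsTriEdge at this ⊢
        tauto
      · exact fwd u v hu hv (Or.inr h)
      · have := fwd v u hv hu (Or.inr h)
        unfold IsTriEdge at this ⊢
        tauto
    · intro h
      rcases h with h | h | h | h
      · have := bwd u v hu hv (Or.inl h)
        unfold IsTriEdge
        tauto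
      · have := bwd v u hv hu (Or.inl h)
        unfold IsTriEdge
        tauto
      · have := bwd u v hu hv (Or.inr h)
        unfold IsTriEdge
        tauto
      · have := bwd v u hv hu (Or.inr h)
        unfold IsTriEdge
        tauto
  -- triangle correspondence
  have hnotw : ∀ (s : Finset (ZMod n)), w ∉ s → ∀ x ∈ s, x ≠ w :=
    fun s hws x hx hc => hws (hc ▸ hx)
  have himgcard : ∀ s : Finset (ZMod n), w ∉ s → (s.image φ).card = s.card := by
    intro s hws
    apply Finset.card_image_of_injOn
    intro a ha b hb hab
    exact hφinj a b (hnotw s hws a ha) (hnotw s hws b hb) hab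
  have hinv1 : ∀ s : Finset (ZMod n), w ∉ s → (s.image φ).image ψ = s := by
    intro s hws
    rw [Finset.image_image]
    rw [Finset.image_congr (f := ψ ∘ φ) (g := id) (fun x hx => hψφ x (hnotw s hws x hx))]
    exact Finset.image_id
  have hinv2 : ∀ t : Finset (ZMod (n-1)), (t.image ψ).image φ = t := by
    intro t
    rw [Finset.image_image]
    rw [Finset.image_congr (f := φ ∘ ψ) (g := id) (fun x _ => hφψ x)]
    exact Finset.image_id
  have htri_fwd : ∀ s ∈ triangles T, w ∉ s → s.image φ ∈ triangles T' := by
    intro s hs hws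
    rw [triangles, Finset.mem_filter] at hs ⊢
    obtain ⟨-, hc, he⟩ := hs
    refine ⟨Finset.mem_univ _, by rw [himgcard s hws]; exact hc, ?_⟩
    intro x hx y hy hxy
    obtain ⟨ux, hux, rfl⟩ := Finset.mem_image.1 hx
    obtain ⟨uy, huy, rfl⟩ := Finset.mem_image.1 hy
    have hne : ux ≠ uy := fun hc2 => hxy (by rw [hc2])
    exact (hedge ux uy (hnotw s hws ux hux) (hnotw s hws uy huy)).1 (he ux hux uy huy hne)
  have hψinj : ∀ a b : ZMod (n-1), ψ a = ψ b → a = b := by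
    intro a b hab
    have := congrArg φ hab
    rwa [hφψ, hφψ] at this
  have htri_bwd : ∀ t ∈ triangles T', t.image ψ ∈ triangles T ∧ w ∉ t.image ψ := by
    intro t ht
    have hwnot : w ∉ t.image ψ := by
      rw [Finset.mem_image]
      rintro ⟨x, hx, hc⟩
      exact hψw x hc
    rw [triangles, Finset.mem_filter] at ht
    obtain ⟨-, hc, he⟩ := ht
    refine ⟨?_, hwnot⟩
    rw [triangles, Finset.mem_filter]
    refine ⟨Finset.mem_univ _, ?_, ?_⟩
    · rw [Finset.card_image_of_injOn (fun a _ b _ hab => hψinj a b hab)]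
      exact hc
    · intro x hx y hy hxy
      obtain ⟨a, haT, rfl⟩ := Finset.mem_image.1 hx
      obtain ⟨b, hbT, rfl⟩ := Finset.mem_image.1 hy
      have hne : a ≠ b := fun hc2 => hxy (by rw [hc2])
      have hE := he a haT b hbT hne
      have := (hedge (ψ a) (ψ b) (hψw a) (hψw b)).2
      rw [hφψ, hφψ] at this
      exact this hE
  -- the counting relation
  refine ⟨T', W, by omega, hWn, htcw, ?_⟩
  intro u hun huW
  set v : ZMod n := ((u : ℕ) : ZMod n) with hvdef
  have hvval : v.val = u := ZMod.val_cast_of_lt hun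
  have hvw : v ≠ w := fun hc => huW (by rw [← hvval, hc, hwval])
  set X := (triangles T).filter (fun s => v ∈ s ∧ w ∉ s) with hXdef
  set Y := (triangles T').filter (fun t => φ v ∈ t) with hYdef
  have hsplit : (triangles T).filter (fun s => v ∈ s) =
      X ∪ (triangles T).filter (fun s => v ∈ s ∧ w ∈ s) := by
    ext s
    simp only [hXdef, Finset.mem_filter, Finset.mem_union]
    tauto
  have hdisj : Disjoint X ((triangles T).filter (fun s => v ∈ s ∧ w ∈ s)) := by
    rw [Finset.disjoint_left]
    intro s hs1 hs2
    rw [hXdef, Finset.mem_filter] at hs1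
    rw [Finset.mem_filter] at hs2
    exact hs1.2.2 hs2.2.2
  have h2nd : (triangles T).filter (fun s => v ∈ s ∧ w ∈ s) =
      if v = P ∨ v = Q then {({P, w, Q} : Finset (ZMod n))} else ∅ := by
    split_ifs with hvPQ
    · ext s
      simp only [Finset.mem_filter, Finset.mem_singleton]
      constructor
      · rintro ⟨h1, _, h3⟩
        exact huniq s h1 h3
      · rintro rfl
        refine ⟨htri, ?_, by simp⟩
        rcases hvPQ with rfl | rfl <;> simp
    · ext s
      simp only [Finset.mem_filter, Finset.notMem_empty, iff_false]
      rintro ⟨h1, h2, h3⟩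
      have := huniq s h1 h3
      subst this
      simp only [Finset.mem_insert, Finset.mem_singleton] at h2
      rcases h2 with h2 | h2 | h2
      · exact hvPQ (Or.inl h2)
      · exact hvw h2
      · exact hvPQ (Or.inr h2)
  have hcnt1 : triCount T v = X.card + (if v = P ∨ v = Q then 1 else 0) := by
    rw [triCount, hsplit, Finset.card_union_of_disjoint hdisj, h2nd]
    split_ifs <;> simp
  have hbij : X.card = Y.card := by
    apply Finset.card_bij (fun s _ => s.image φ)
    · intro s hs
      rw [hXdef, Finset.mem_filter] at hs
      rw [hYdef, Finset.mem_filter]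
      exact ⟨htri_fwd s hs.1 hs.2.2, Finset.mem_image_of_mem φ hs.2.1⟩
    · intro s1 hs1 s2 hs2 hi
      rw [hXdef, Finset.mem_filter] at hs1 hs2
      have := congrArg (fun z => Finset.image ψ z) hi
      rwa [hinv1 s1 hs1.2.2, hinv1 s2 hs2.2.2] at this
    · intro t ht
      rw [hYdef, Finset.mem_filter] at ht
      obtain ⟨ht1, ht2⟩ := ht
      obtain ⟨hb1, hb2⟩ := htri_bwd t ht1
      refine ⟨t.image ψ, ?_, hinv2 t⟩
      rw [hXdef, Finset.mem_filter]
      refine ⟨hb1, ?_, hb2⟩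
      have : ψ (φ v) ∈ t.image ψ := Finset.mem_image_of_mem ψ ht2
      rwa [hψφ v hvw] at this
  have hcnt2 : triCount T' (φ v) = Y.card := rfl
  have hφveq : φ v = (((if u < W then u else u - 1) : ℕ) : ZMod (n-1)) := by
    rw [hφdef]
    dsimp only
    rw [hvval]
  have hind : (v = P ∨ v = Q) ↔ (u = W - 1 ∨ u = W + 1) := by
    constructor
    · rintro (rfl | rfl)
      · left; omega
      · right; omega
    · rintro (h | h)
      · left
        exact ZMod.val_injective n (by omega)
      · right
        exact ZMod.val_injective n (by omega)
  rw [← hφveq, hcnt2, hcnt1, hbij]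
  push_cast
  rcases Classical.em (u = W - 1 ∨ u = W + 1) with hca | hca
  · rw [if_pos hca, if_pos (hind.2 hca)]
  · rw [if_neg hca, if_neg (fun hc => hca (hind.1 hc))]

lemma base3 (T : PolygonTriangulation 3) : ∀ v : ZMod 3, triCount T v = 1 := by
  have htri : triangles T = {(Finset.univ : Finset (ZMod 3))} := by
    ext s
    rw [triangles, Finset.mem_filter, Finset.mem_singleton]
    constructor
    · rintro ⟨-, hc, -⟩
      exact Finset.eq_univ_of_card s (by rw [hc]; rfl)
    · rintro rfl
      refine ⟨Finset.mem_univ _, by rw [Finset.card_univ]; rfl, ?_⟩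
      intro i _ j _ hij
      have : j = i + 1 ∨ i = j + 1 := by revert hij; revert i j; decide
      rcases this with h | h
      · exact Or.inr (Or.inr (Or.inl h))
      · exact Or.inr (Or.inr (Or.inr h))
  intro v
  rw [triCount, htri]
  rw [Finset.filter_singleton, if_pos (Finset.mem_univ v), Finset.card_singleton]

lemma Pp_three_ones (q : ℤ → ℤ) (h : ∀ i : ℤ, q i = 1) : ∀ i : ℤ, Pp q i 3 = -1 := by
  intro i
  show Mm (q i) * (Mm (q (i+1)) * (Mm (q (i+1+1)) * 1)) = -1
  rw [h, h, h, mul_one]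
  ext a b
  fin_cases a <;> fin_cases b <;>
    simp [Mm, Matrix.mul_apply, Fin.sum_univ_two, Matrix.neg_apply, Matrix.one_apply]

noncomputable def qfun (n : ℕ) [NeZero n] (T : PolygonTriangulation n) : ℤ → ℤ :=
  fun i => (triCount T (i : ZMod n) : ℤ)

lemma cast_helper (m : ℕ) (x : ℤ) (u : ℕ) (h : x = u ∨ x = u + m) :
    ((x : ℤ) : ZMod m) = ((u : ℕ) : ZMod m) := by
  rcases h with rfl | rfl
  · push_cast; rfl
  · push_cast
    simp [ZMod.natCast_self]

lemma qfun_eq (n : ℕ) [NeZero n] (T : PolygonTriangulation n) (x : ℤ) (u : ℕ)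
    (h : x = u ∨ x = u + n) : qfun n T x = (triCount T ((u : ℕ) : ZMod n) : ℤ) := by
  unfold qfun
  rw [cast_helper n x u h]

lemma qfun_period (n : ℕ) [NeZero n] (T : PolygonTriangulation n) :
    ∀ i : ℤ, qfun n T (i + n) = qfun n T i := by
  intro i
  unfold qfun
  have h : ((i + (n:ℤ) : ℤ) : ZMod n) = ((i : ℤ) : ZMod n) := by
    push_cast
    simp
  rw [h]

lemma ClosurePos_shift (m : ℕ) (q : ℤ → ℤ) (c : ℤ) (h : ClosurePos m q) :
    ClosurePos m (fun i => q (i + c)) := by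
  obtain ⟨h1, h2⟩ := h
  constructor
  · intro i
    rw [Pp_shift]
    exact h1 (i + c)
  · intro i ℓ hl1 hl2
    unfold cc
    rw [Pp_shift]
    exact h2 (i + c) ℓ hl1 hl2

lemma master : ∀ (n : ℕ), 3 ≤ n → ∀ [NeZero n] (T : PolygonTriangulation n),
    ClosurePos n (qfun n T) := by
  intro n
  induction n using Nat.strong_induction_on with
  | _ n ih =>
    intro hn inst T
    rcases eq_or_lt_of_le hn with h3 | h4
    · -- base case n = 3
      subst h3
      have hq1 : ∀ i : ℤ, qfun 3 T i = 1 := by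
        intro i
        unfold qfun
        rw [base3 T]
        norm_num
      constructor
      · exact Pp_three_ones (qfun 3 T) hq1
      · intro i ℓ hl1 hl2
        omega
    · -- inductive step, n ≥ 4
      have hn4 : 4 ≤ n := h4
      haveI : NeZero (n-1) := ⟨by omega⟩
      obtain ⟨T', W, hW1, hW2, hcw, hrel⟩ := step n hn4 T
      have hC' : ClosurePos (n-1) (qfun (n-1) T') := ih (n-1) (by omega) (by omega) T'
      set qs : ℤ → ℤ := fun i => qfun n T (i + (W+1)) with hqsdef
      set q's : ℤ → ℤ := fun i => qfun (n-1) T' (i + W) with hq'sdef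
      -- transfer hypotheses
      have hqsper : ∀ i : ℤ, qs (i + n) = qs i := by
        intro i
        show qfun n T (i + n + (W+1)) = qfun n T (i + (W+1))
        rw [show i + (n:ℤ) + (W+1) = (i + (W+1)) + n by ring]
        exact qfun_period n T _
      have hq'sper : ∀ i : ℤ, q's (i + (n-1:ℕ)) = q's i := by
        intro i
        show qfun (n-1) T' (i + (n-1:ℕ) + W) = qfun (n-1) T' (i + W)
        rw [show i + ((n-1:ℕ):ℤ) + W = (i + W) + (n-1:ℕ) by ring]
        exact qfun_period (n-1) T' _
      have hrel' : ∀ u : ℕ, u < n → u ≠ W →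
          (triCount T ((u : ℕ) : ZMod n) : ℤ) =
          (triCount T' (((if u < W then u else u - 1) : ℕ) : ZMod (n-1)) : ℤ) +
          (if u = W - 1 ∨ u = W + 1 then 1 else 0) := hrel
      have h0 : qs 0 = q's 0 + 1 := by
        show qfun n T (0 + (W+1)) = qfun (n-1) T' (0 + W) + 1
        rw [qfun_eq n T (0 + (W+1)) (W+1) (Or.inl (by push_cast; ring)),
          qfun_eq (n-1) T' (0 + W) W (Or.inl (by push_cast; ring))]
        have := hrel' (W+1) (by omega) (by omega)
        rw [if_neg (by omega), if_pos (by omega)] at this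
        rw [this, show W + 1 - 1 = W by omega]
      have hmid : ∀ k : ℤ, 1 ≤ k → k ≤ (n:ℤ) - 3 → qs k = q's k := by
        intro k hk1 hk2
        obtain ⟨a, rfl⟩ : ∃ a : ℕ, k = (a : ℤ) := ⟨k.toNat, by omega⟩
        have ha1 : 1 ≤ a := by omega
        have ha2 : a + 3 ≤ n := by omega
        show qfun n T ((a:ℤ) + (W+1)) = qfun (n-1) T' ((a:ℤ) + W)
        rcases Nat.lt_or_ge (W + 1 + a) n with hc | hc
        · rw [qfun_eq n T _ (W+1+a) (Or.inl (by push_cast; ring)),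
            qfun_eq (n-1) T' _ (W+a) (Or.inl (by push_cast; ring))]
          have := hrel' (W+1+a) (by omega) (by omega)
          rw [if_neg (by omega), if_neg (by omega)] at this
          rw [this, show W + 1 + a - 1 = W + a by omega]
          ring
        · rw [qfun_eq n T _ (W+1+a-n) (Or.inr (by push_cast; omega)),
            qfun_eq (n-1) T' _ (W+a-(n-1)) (Or.inr (by push_cast; omega))]
          have := hrel' (W+1+a-n) (by omega) (by omega)
          rw [if_pos (by omega), if_neg (by omega)] at this
          rw [this, show W + 1 + a - n = W + a - (n-1) by omega]
          ring
      have hn2 : qs ((n:ℤ) - 2) = q's ((n:ℤ) - 2) + 1 := by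
        show qfun n T ((n:ℤ) - 2 + (W+1)) = qfun (n-1) T' ((n:ℤ) - 2 + W) + 1
        rw [qfun_eq n T _ (W-1) (Or.inr (by push_cast; omega)),
          qfun_eq (n-1) T' _ (W-1) (Or.inr (by push_cast; omega))]
        have := hrel' (W-1) (by omega) (by omega)
        rw [if_pos (by omega), if_pos (by omega)] at this
        rw [this]
      have hlast : qs ((n:ℤ) - 1) = 1 := by
        show qfun n T ((n:ℤ) - 1 + (W+1)) = 1
        rw [qfun_eq n T _ W (Or.inr (by push_cast; omega))]
        rw [hcw]
        norm_num
      have hC's : ClosurePos (n-1) q's :=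
        ClosurePos_shift (n-1) (qfun (n-1) T') W hC'
      have hCs : ClosurePos n qs :=
        transfer n hn4 qs q's hqsper hq'sper h0 hmid hn2 hlast hC's
      have heq : (fun i => qs (i + (-(W+1:ℤ)))) = qfun n T := by
        funext i
        show qfun n T (i + (-(W+1:ℤ)) + (W+1)) = qfun n T i
        congr 1
        ring
      rw [← heq]
      exact ClosurePos_shift n qs (-(W+1:ℤ)) hCs

end ConwayCoxeter

/-- The incidence counts of triangles at the vertices of a triangulated convex `n`-gon form
the quiddity sequence of a closed integral frieze pattern of order `n`. -/
theorem triangulation_gives_quiddity (n : ℕ) [NeZero n] (hn : 3 ≤ n)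
    (T : PolygonTriangulation n) :
    IsQuiddity n (fun v => (triCount T v : ℤ)) := by
  obtain ⟨hfz, hquid⟩ := partI n hn (qfun n T) (master n hn T)
  exact ⟨_, hfz, hquid⟩
end

section
/- If (a_1, ..., a_n) is the quiddity sequence of a closed integral frieze pattern of order n, then for any index i, the sequence (a_1, ..., a_{i-1}, a_i + 1, 1, a_{i+1} + 1, a_{i+2}, ..., a_n) obtained by inserting a 1 between positions i and i+1 and increasing both neighbors by 1 is the quiddity sequence of a closed integral frieze pattern of order n+1. -/
/-- `q : ℤ → ℤ` is the (n-periodic) quiddity sequence of a closed integral frieze of order `n`. -/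
def IsQuiddityZ (n : ℕ) (q : ℤ → ℤ) : Prop :=
  (∀ i : ℤ, q (i + n) = q i) ∧
  ∃ a : ℤ → ℤ → ℤ, IsClosedFrieze n a ∧ ∀ i : ℤ, a i (i + 2) = q i

private lemma ediv_eval {N x m r : ℤ} (hN : 0 < N) (h : x = r + N * m) (h0 : 0 ≤ r) (h1 : r < N) :
    x / N = m := by
  subst h
  rw [Int.add_mul_ediv_left _ _ (by omega : N ≠ 0), Int.ediv_eq_zero_of_lt h0 h1, zero_add]

private lemma emod_eval {N x m r : ℤ} (hN : 0 < N) (h : x = r + N * m) (h0 : 0 ≤ r) (h1 : r < N) :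
    x % N = r := by
  subst h
  rw [Int.add_mul_emod_self_left, Int.emod_eq_of_lt h0 h1]

private lemma per_int {f : ℤ → ℤ} {c : ℤ} (h : ∀ x, f (x + c) = f x) (x m : ℤ) :
    f (x + m * c) = f x := by
  induction m using Int.induction_on with
  | zero => simp
  | succ k ih => rw [show x + ((k:ℤ) + 1) * c = (x + k * c) + c by ring, h, ih]
  | pred k ih =>
      have h2 := h (x + (-(k:ℤ) - 1) * c)
      rw [show x + (-(k:ℤ) - 1) * c + c = x + (-(k:ℤ)) * c by ring] at h2
      rw [← h2, ih]

private def FF (n : ℕ) (i : ℤ) (a : ℤ → ℤ → ℤ) (k l : ℤ) : ℤ :=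
  (if (k - i - 2) % ((n : ℤ) + 1) = 0 then
      a (k - 1 - (k - i - 3) / ((n : ℤ) + 1) - 1) (l - 1 - (l - i - 3) / ((n : ℤ) + 1)) else 0)
  + a (k - 1 - (k - i - 3) / ((n : ℤ) + 1)) (l - 1 - (l - i - 3) / ((n : ℤ) + 1))
  + (if (l - i - 2) % ((n : ℤ) + 1) = 0 then
      a (k - 1 - (k - i - 3) / ((n : ℤ) + 1)) (l - 1 - (l - i - 3) / ((n : ℤ) + 1) - 1) else 0)

private def AA (n : ℕ) (i : ℤ) (a : ℤ → ℤ → ℤ) (k l : ℤ) : ℤ :=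
  if k < l ∧ l < k + ((n : ℤ) + 1) then FF n i a k l else 0

private lemma AA_in (n : ℕ) (i : ℤ) (a : ℤ → ℤ → ℤ) {k l : ℤ} (h1 : k < l)
    (h2 : l < k + ((n : ℤ) + 1)) : AA n i a k l = FF n i a k l := if_pos ⟨h1, h2⟩

private lemma AA_out (n : ℕ) (i : ℤ) (a : ℤ → ℤ → ℤ) {k l : ℤ}
    (h : ¬ (k < l ∧ l < k + ((n : ℤ) + 1))) : AA n i a k l = 0 := if_neg h

private lemma FF_eval (n : ℕ) (i : ℤ) (a : ℤ → ℤ → ℤ) (k l mk ml rk rl : ℤ)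
    (hk : k - i - 2 = rk + ((n:ℤ)+1) * mk) (hrk0 : 0 ≤ rk) (hrk1 : rk ≤ (n:ℤ))
    (hl : l - i - 2 = rl + ((n:ℤ)+1) * ml) (hrl0 : 0 ≤ rl) (hrl1 : rl ≤ (n:ℤ)) :
    FF n i a k l =
      (if rk = 0 then a (k - mk - 1) (if rl = 0 then l - ml else l - 1 - ml) else 0)
      + a (if rk = 0 then k - mk else k - 1 - mk) (if rl = 0 then l - ml else l - 1 - ml)
      + (if rl = 0 then a (if rk = 0 then k - mk else k - 1 - mk) (l - ml - 1) else 0) := by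
  have hN : (0:ℤ) < (n:ℤ)+1 := by positivity
  have emk : (k - i - 2) % ((n:ℤ)+1) = rk := emod_eval (m := mk) hN (by linarith) hrk0 (by omega)
  have eml : (l - i - 2) % ((n:ℤ)+1) = rl := emod_eval (m := ml) hN (by linarith) hrl0 (by omega)
  have edk : (k - i - 3) / ((n:ℤ)+1) = if rk = 0 then mk - 1 else mk := by
    by_cases h : rk = 0
    · rw [if_pos h]
      exact ediv_eval (r := (n:ℤ)) hN (by subst h; linear_combination hk) (by omega) (by omega)
    · rw [if_neg h]
      exact ediv_eval (r := rk - 1) hN (by linarith) (by omega) (by omega)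
  have edl : (l - i - 3) / ((n:ℤ)+1) = if rl = 0 then ml - 1 else ml := by
    by_cases h : rl = 0
    · rw [if_pos h]
      exact ediv_eval (r := (n:ℤ)) hN (by subst h; linear_combination hl) (by omega) (by omega)
    · rw [if_neg h]
      exact ediv_eval (r := rl - 1) hN (by linarith) (by omega) (by omega)
  simp only [FF]
  rw [emk, eml, edk, edl]
  by_cases h1 : rk = 0 <;> by_cases h2 : rl = 0 <;>
    simp only [h1, h2, if_true, if_false, reduceIte] <;> ring_nf

private lemma frieze_nonneg_s4 {n : ℕ} {a : ℤ → ℤ → ℤ} (hn : 4 ≤ n) (ha : IsClosedFrieze n a) :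
    ∀ x y : ℤ, 0 ≤ a x y := by
  obtain ⟨h00, h01, hrow1, hrow0, hpos, hdia, hlo, hhi⟩ := ha
  intro x y
  rcases (by omega :
      y < x ∨ y = x ∨ y = x + 1 ∨ (x + 2 ≤ y ∧ y ≤ x + (n:ℤ) - 2) ∨ y = x + (n:ℤ) - 1 ∨
        y = x + (n:ℤ) ∨ x + (n:ℤ) < y) with h | h | h | h | h | h | h
  · rw [hlo x y h]
  · rw [h, h00]
  · rw [h, h01]; norm_num
  · exact le_of_lt (hpos x y h.1 h.2)
  · rw [h, hrow1]; norm_num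
  · rw [h, hrow0]
  · rw [hhi x y h]

private lemma frieze_pos {n : ℕ} {a : ℤ → ℤ → ℤ} (hn : 4 ≤ n) (ha : IsClosedFrieze n a) :
    ∀ x y : ℤ, x + 1 ≤ y → y ≤ x + (n:ℤ) - 1 → 0 < a x y := by
  obtain ⟨h00, h01, hrow1, hrow0, hpos, hdia, hlo, hhi⟩ := ha
  intro x y hy1 hy2
  rcases (by omega :
      y = x + 1 ∨ (x + 2 ≤ y ∧ y ≤ x + (n:ℤ) - 2) ∨ y = x + (n:ℤ) - 1) with h | h | h
  · rw [h, h01]; norm_num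
  · exact hpos x y h.1 h.2
  · rw [h, hrow1]; norm_num

set_option maxHeartbeats 1000000 in
private lemma AA_frieze (n : ℕ) (hn : 4 ≤ n) (i : ℤ) (a : ℤ → ℤ → ℤ)
    (ha : IsClosedFrieze n a) : IsClosedFrieze (n + 1) (AA n i a) := by
  have hN : (0:ℤ) < (n:ℤ)+1 := by positivity
  have key : ∀ k : ℤ, ∃ m r : ℤ, k - i - 2 = r + ((n:ℤ)+1) * m ∧ 0 ≤ r ∧ r ≤ (n:ℤ) := by
    intro k
    refine ⟨(k - i - 2) / ((n:ℤ)+1), (k - i - 2) % ((n:ℤ)+1),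
      (Int.emod_add_mul_ediv (k - i - 2) ((n:ℤ)+1)).symm, Int.emod_nonneg _ (by omega), ?_⟩
    have := Int.emod_lt_of_pos (k - i - 2) hN
    omega
  obtain ⟨h00, h01, hrow1, hrow0, hpos, hdia, hlo, hhi⟩ := ha
  have hnn := frieze_nonneg_s4 hn ⟨h00, h01, hrow1, hrow0, hpos, hdia, hlo, hhi⟩
  have hpp := frieze_pos hn ⟨h00, h01, hrow1, hrow0, hpos, hdia, hlo, hhi⟩
  -- row at distance n is all ones
  have rowN : ∀ k : ℤ, AA n i a k (k + (n:ℤ)) = 1 := by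
    intro k
    obtain ⟨m, r, hk, hr0, hr1⟩ := key k
    rcases (by omega : r = 0 ∨ r = 1 ∨ 2 ≤ r) with hr | hr | hr
    · rw [AA_in n i a (by omega) (by omega),
        FF_eval n i a k (k + (n:ℤ)) m m r (r + (n:ℤ)) hk hr0 (by omega)
          (by linarith) (by omega) (by omega)]
      simp only [if_pos hr, if_neg (show ¬(r + (n:ℤ) = 0) by omega)]
      have t1 : a (k - m - 1) (k + (n:ℤ) - 1 - m) = 0 := by
        rw [show k + (n:ℤ) - 1 - m = (k - m - 1) + (n:ℤ) by ring]; exact hrow0 _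
      have t2 : a (k - m) (k + (n:ℤ) - 1 - m) = 1 := by
        rw [show k + (n:ℤ) - 1 - m = (k - m) + (n:ℤ) - 1 by ring]; exact hrow1 _
      rw [t1, t2]; ring
    · rw [AA_in n i a (by omega) (by omega),
        FF_eval n i a k (k + (n:ℤ)) m (m + 1) r 0 hk hr0 (by omega)
          (by linarith) (by omega) (by omega)]
      simp only [if_neg (show ¬(r = 0) by omega), if_pos (rfl : (0:ℤ) = 0), if_true]
      have t1 : a (k - 1 - m) (k + (n:ℤ) - (m + 1)) = 0 := by
        rw [show k + (n:ℤ) - (m + 1) = (k - 1 - m) + (n:ℤ) by ring]; exact hrow0 _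
      have t2 : a (k - 1 - m) (k + (n:ℤ) - (m + 1) - 1) = 1 := by
        rw [show k + (n:ℤ) - (m + 1) - 1 = (k - 1 - m) + (n:ℤ) - 1 by ring]; exact hrow1 _
      rw [t1, t2]; ring
    · rw [AA_in n i a (by omega) (by omega),
        FF_eval n i a k (k + (n:ℤ)) m (m + 1) r (r - 1) hk hr0 (by omega)
          (by linarith) (by omega) (by omega)]
      simp only [if_neg (show ¬(r = 0) by omega), if_neg (show ¬(r - 1 = 0) by omega)]
      have t2 : a (k - 1 - m) (k + (n:ℤ) - 1 - (m + 1)) = 1 := by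
        rw [show k + (n:ℤ) - 1 - (m + 1) = (k - 1 - m) + (n:ℤ) - 1 by ring]; exact hrow1 _
      rw [t2]; ring
  refine ⟨?_, ?_, ?_, ?_, ?_, ?_, ?_, ?_⟩
  · -- diagonal of zeros
    intro k
    exact AA_out n i a (by omega)
  · -- row of ones
    intro k
    obtain ⟨m, r, hk, hr0, hr1⟩ := key k
    rcases (by omega : r = 0 ∨ r = (n:ℤ) ∨ (1 ≤ r ∧ r ≤ (n:ℤ) - 1)) with hr | hr | hr
    · rw [AA_in n i a (by omega) (by omega),
        FF_eval n i a k (k + 1) m m r (r + 1) hk hr0 (by omega)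
          (by linarith) (by omega) (by omega)]
      simp only [if_pos hr, if_neg (show ¬(r + 1 = 0) by omega)]
      have t1 : a (k - m - 1) (k + 1 - 1 - m) = 1 := by
        rw [show k + 1 - 1 - m = (k - m - 1) + 1 by ring]; exact h01 _
      have t2 : a (k - m) (k + 1 - 1 - m) = 0 := by
        rw [show k + 1 - 1 - m = k - m by ring]; exact h00 _
      rw [t1, t2]; ring
    · rw [AA_in n i a (by omega) (by omega),
        FF_eval n i a k (k + 1) m (m + 1) r 0 hk hr0 (by omega)
          (by linarith) (by omega) (by omega)]
      simp only [if_neg (show ¬(r = 0) by omega), if_pos (rfl : (0:ℤ) = 0), if_true]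
      have t1 : a (k - 1 - m) (k + 1 - (m + 1)) = 1 := by
        rw [show k + 1 - (m + 1) = (k - 1 - m) + 1 by ring]; exact h01 _
      have t2 : a (k - 1 - m) (k + 1 - (m + 1) - 1) = 0 := by
        rw [show k + 1 - (m + 1) - 1 = k - 1 - m by ring]; exact h00 _
      rw [t1, t2]; ring
    · rw [AA_in n i a (by omega) (by omega),
        FF_eval n i a k (k + 1) m m r (r + 1) hk hr0 (by omega)
          (by linarith) (by omega) (by omega)]
      simp only [if_neg (show ¬(r = 0) by omega), if_neg (show ¬(r + 1 = 0) by omega)]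
      have t1 : a (k - 1 - m) (k + 1 - 1 - m) = 1 := by
        rw [show k + 1 - 1 - m = (k - 1 - m) + 1 by ring]; exact h01 _
      rw [t1]; ring
  · -- row of ones at n+1-1
    intro k
    rw [show k + ((n:ℕ)+1 : ℕ) - 1 = k + (n:ℤ) by push_cast; ring]
    exact rowN k
  · -- row of zeros at n+1
    intro k
    refine AA_out n i a ?_
    push_cast
    omega
  · -- positivity
    intro k l h1 h2
    push_cast at h2
    obtain ⟨m, r, hk, hr0, hr1⟩ := key k
    have hd1 : 2 ≤ l - k := by omega
    have hd2 : l - k ≤ (n:ℤ) - 1 := by omega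
    rcases (by omega : r = 0 ∨ r = (n:ℤ) ∨ (1 ≤ r ∧ r ≤ (n:ℤ) - 1 ∧ r + (l - k) ≤ (n:ℤ)) ∨
        (1 ≤ r ∧ r ≤ (n:ℤ) - 1 ∧ r + (l - k) = (n:ℤ) + 1) ∨
        (1 ≤ r ∧ r ≤ (n:ℤ) - 1 ∧ (n:ℤ) + 2 ≤ r + (l - k))) with hr | hr | hr | hr | hr
    · rw [AA_in n i a (by omega) (by omega),
        FF_eval n i a k l m m r (r + (l - k)) hk hr0 (by omega)
          (by linarith) (by omega) (by omega)]
      simp only [if_pos hr, if_neg (show ¬(r + (l - k) = 0) by omega)]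
      have t1 := hnn (k - m - 1) (l - 1 - m)
      have t2 := hpp (k - m) (l - 1 - m) (by omega) (by omega)
      linarith
    · rw [AA_in n i a (by omega) (by omega),
        FF_eval n i a k l m (m + 1) r (r + (l - k) - ((n:ℤ)+1)) hk hr0 (by omega)
          (by linarith) (by omega) (by omega)]
      simp only [if_neg (show ¬(r = 0) by omega),
        if_neg (show ¬(r + (l - k) - ((n:ℤ)+1) = 0) by omega)]
      have t2 := hpp (k - 1 - m) (l - 1 - (m + 1)) (by omega) (by omega)
      linarith
    · rw [AA_in n i a (by omega) (by omega),
        FF_eval n i a k l m m r (r + (l - k)) hk hr0 (by omega)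
          (by linarith) (by omega) (by omega)]
      simp only [if_neg (show ¬(r = 0) by omega), if_neg (show ¬(r + (l - k) = 0) by omega)]
      have t2 := hpp (k - 1 - m) (l - 1 - m) (by omega) (by omega)
      linarith
    · rw [AA_in n i a (by omega) (by omega),
        FF_eval n i a k l m (m + 1) r 0 hk hr0 (by omega)
          (by linarith) (by omega) (by omega)]
      simp only [if_neg (show ¬(r = 0) by omega), if_pos (rfl : (0:ℤ) = 0), if_true]
      have t1 := hnn (k - 1 - m) (l - (m + 1) - 1)
      have t2 := hpp (k - 1 - m) (l - (m + 1)) (by omega) (by omega)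
      linarith
    · rw [AA_in n i a (by omega) (by omega),
        FF_eval n i a k l m (m + 1) r (r + (l - k) - ((n:ℤ)+1)) hk hr0 (by omega)
          (by linarith) (by omega) (by omega)]
      simp only [if_neg (show ¬(r = 0) by omega),
        if_neg (show ¬(r + (l - k) - ((n:ℤ)+1) = 0) by omega)]
      have t2 := hpp (k - 1 - m) (l - 1 - (m + 1)) (by omega) (by omega)
      linarith
  · -- diamond rule
    intro k l h1 h2
    push_cast at h2
    obtain ⟨m, r, hk, hr0, hr1⟩ := key k
    have hd1 : 1 ≤ l - k := by omega
    have hd2 : l - k ≤ (n:ℤ) := by omega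
    rcases (by omega :
        (r = 0 ∧ l - k ≤ (n:ℤ) - 1) ∨ (r = 0 ∧ l = k + (n:ℤ)) ∨
        (r = (n:ℤ) ∧ l = k + 1) ∨ (r = (n:ℤ) ∧ 2 ≤ l - k) ∨
        (1 ≤ r ∧ r ≤ (n:ℤ) - 1 ∧ r + (l - k) = (n:ℤ) + 1) ∨
        (1 ≤ r ∧ r ≤ (n:ℤ) - 1 ∧ r + (l - k) = (n:ℤ)) ∨
        (1 ≤ r ∧ r ≤ (n:ℤ) - 1 ∧ r + (l - k) ≤ (n:ℤ) - 1) ∨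
        (1 ≤ r ∧ r ≤ (n:ℤ) - 1 ∧ (n:ℤ) + 2 ≤ r + (l - k)))
      with ⟨hr, hd⟩ | ⟨hr, hd⟩ | ⟨hr, hd⟩ | ⟨hr, hd⟩ | ⟨hr, hr', hd⟩ | ⟨hr, hr', hd⟩ |
        ⟨hr, hr', hd⟩ | ⟨hr, hr', hd⟩
    · -- case (1): k new, l - k ≤ n - 1
      have A1 : AA n i a k l = a (k - m - 1) (l - 1 - m) + a (k - m) (l - 1 - m) := by
        rw [AA_in n i a (by omega) (by omega),
          FF_eval n i a k l m m r (r + (l - k)) hk hr0 (by omega)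
            (by linarith) (by omega) (by omega)]
        simp only [if_pos hr, if_neg (show ¬(r + (l - k) = 0) by omega)]
        ring
      have A2 : AA n i a (k + 1) (l + 1) = a (k - m) (l - m) := by
        rw [AA_in n i a (by omega) (by omega),
          FF_eval n i a (k + 1) (l + 1) m m (r + 1) (r + (l - k) + 1) (by linarith) (by omega)
            (by omega) (by linarith) (by omega) (by omega)]
        simp only [if_neg (show ¬(r + 1 = 0) by omega),
          if_neg (show ¬(r + (l - k) + 1 = 0) by omega)]
        ring_nf
      have A3 : AA n i a k (l + 1) = a (k - m - 1) (l - m) + a (k - m) (l - m) := by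
        rw [AA_in n i a (by omega) (by omega),
          FF_eval n i a k (l + 1) m m r (r + (l - k) + 1) hk hr0 (by omega)
            (by linarith) (by omega) (by omega)]
        simp only [if_pos hr, if_neg (show ¬(r + (l - k) + 1 = 0) by omega)]
        ring_nf
      have A4 : AA n i a (k + 1) l = a (k - m) (l - 1 - m) := by
        by_cases hd' : k + 1 < l
        · rw [AA_in n i a hd' (by omega),
            FF_eval n i a (k + 1) l m m (r + 1) (r + (l - k)) (by linarith) (by omega)
              (by omega) (by linarith) (by omega) (by omega)]
          simp only [if_neg (show ¬(r + 1 = 0) by omega),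
            if_neg (show ¬(r + (l - k) = 0) by omega)]
          ring_nf
        · rw [AA_out n i a (by omega), show l - 1 - m = k - m by omega]
          exact (h00 _).symm
      rw [A1, A2, A3, A4]
      have H := hdia (k - m - 1) (l - 1 - m) (by omega) (by omega)
      rw [show k - m - 1 + 1 = k - m by ring, show l - 1 - m + 1 = l - m by ring] at H
      linear_combination H
    · -- case (2): k new, l = k + n
      subst hd
      have A1 : AA n i a k (k + (n:ℤ)) = 1 := rowN k
      have A2 : AA n i a (k + 1) (k + (n:ℤ) + 1) = 1 := by
        rw [AA_in n i a (by omega) (by omega),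
          FF_eval n i a (k + 1) (k + (n:ℤ) + 1) m (m + 1) (r + 1) 0 (by linarith) (by omega)
            (by omega) (by linarith) (by omega) (by omega)]
        simp only [if_neg (show ¬(r + 1 = 0) by omega), if_pos (rfl : (0:ℤ) = 0), if_true]
        have t1 : a (k + 1 - 1 - m) (k + (n:ℤ) + 1 - (m + 1)) = 0 := by
          rw [show k + (n:ℤ) + 1 - (m + 1) = (k + 1 - 1 - m) + (n:ℤ) by ring]; exact hrow0 _
        have t2 : a (k + 1 - 1 - m) (k + (n:ℤ) + 1 - (m + 1) - 1) = 1 := by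
          rw [show k + (n:ℤ) + 1 - (m + 1) - 1 = (k + 1 - 1 - m) + (n:ℤ) - 1 by ring]
          exact hrow1 _
        rw [t1, t2]; ring
      have A3 : AA n i a k (k + (n:ℤ) + 1) = 0 := AA_out n i a (by omega)
      have A4 : AA n i a (k + 1) (k + (n:ℤ)) = 1 := by
        rw [AA_in n i a (by omega) (by omega),
          FF_eval n i a (k + 1) (k + (n:ℤ)) m m (r + 1) (r + (n:ℤ)) (by linarith) (by omega)
            (by omega) (by linarith) (by omega) (by omega)]
        simp only [if_neg (show ¬(r + 1 = 0) by omega),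
          if_neg (show ¬(r + (n:ℤ) = 0) by omega)]
        have t1 : a (k + 1 - 1 - m) (k + (n:ℤ) - 1 - m) = 1 := by
          rw [show k + (n:ℤ) - 1 - m = (k + 1 - 1 - m) + (n:ℤ) - 1 by ring]; exact hrow1 _
        rw [t1]; ring
      rw [A1, A2, A3, A4]; ring
    · -- case (3): l = k + 1 new
      subst hd
      have A1 : AA n i a k (k + 1) = 1 := by
        rw [AA_in n i a (by omega) (by omega),
          FF_eval n i a k (k + 1) m (m + 1) r 0 hk hr0 (by omega)
            (by linarith) (by omega) (by omega)]
        simp only [if_neg (show ¬(r = 0) by omega), if_pos (rfl : (0:ℤ) = 0), if_true]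
        have t1 : a (k - 1 - m) (k + 1 - (m + 1)) = 1 := by
          rw [show k + 1 - (m + 1) = (k - 1 - m) + 1 by ring]; exact h01 _
        have t2 : a (k - 1 - m) (k + 1 - (m + 1) - 1) = 0 := by
          rw [show k + 1 - (m + 1) - 1 = k - 1 - m by ring]; exact h00 _
        rw [t1, t2]; ring
      have A2 : AA n i a (k + 1) (k + 1 + 1) = 1 := by
        rw [AA_in n i a (by omega) (by omega),
          FF_eval n i a (k + 1) (k + 1 + 1) (m + 1) (m + 1) 0 1 (by linarith)
            (by omega) (by omega) (by linarith) (by omega) (by omega)]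
        simp only [if_pos (rfl : (0:ℤ) = 0), if_true, if_neg (show ¬((1:ℤ) = 0) by omega)]
        have t1 : a (k + 1 - (m + 1) - 1) (k + 1 + 1 - 1 - (m + 1)) = 1 := by
          rw [show k + 1 + 1 - 1 - (m + 1) = (k + 1 - (m + 1) - 1) + 1 by ring]; exact h01 _
        have t2 : a (k + 1 - (m + 1)) (k + 1 + 1 - 1 - (m + 1)) = 0 := by
          rw [show k + 1 + 1 - 1 - (m + 1) = k + 1 - (m + 1) by ring]; exact h00 _
        rw [t1, t2]; ring
      have A3 : AA n i a k (k + 1 + 1) = 1 := by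
        rw [AA_in n i a (by omega) (by omega),
          FF_eval n i a k (k + 1 + 1) m (m + 1) r 1 hk hr0 (by omega)
            (by linarith) (by omega) (by omega)]
        simp only [if_neg (show ¬(r = 0) by omega), if_neg (show ¬((1:ℤ) = 0) by omega)]
        have t1 : a (k - 1 - m) (k + 1 + 1 - 1 - (m + 1)) = 1 := by
          rw [show k + 1 + 1 - 1 - (m + 1) = (k - 1 - m) + 1 by ring]; exact h01 _
        rw [t1]; ring
      have A4 : AA n i a (k + 1) (k + 1) = 0 := AA_out n i a (by omega)
      rw [A1, A2, A3, A4]; ring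
    · -- case (4): k+1 new, 2 ≤ l - k
      have A1 : AA n i a k l = a (k - 1 - m) (l - 2 - m) := by
        rw [AA_in n i a (by omega) (by omega),
          FF_eval n i a k l m (m + 1) r (r + (l - k) - ((n:ℤ)+1)) hk hr0 (by omega)
            (by linarith) (by omega) (by omega)]
        simp only [if_neg (show ¬(r = 0) by omega),
          if_neg (show ¬(r + (l - k) - ((n:ℤ)+1) = 0) by omega)]
        ring_nf
      have A2 : AA n i a (k + 1) (l + 1) = a (k - 1 - m) (l - 1 - m) + a (k - m) (l - 1 - m) := by
        rw [AA_in n i a (by omega) (by omega),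
          FF_eval n i a (k + 1) (l + 1) (m + 1) (m + 1) 0 (r + (l - k) - (n:ℤ))
            (by linarith) (by omega) (by omega)
            (by linarith) (by omega) (by omega)]
        simp only [if_pos (rfl : (0:ℤ) = 0), if_true,
          if_neg (show ¬(r + (l - k) - (n:ℤ) = 0) by omega)]
        ring_nf
      have A3 : AA n i a k (l + 1) = a (k - 1 - m) (l - 1 - m) := by
        by_cases hd' : l - k ≤ (n:ℤ) - 1
        · rw [AA_in n i a (by omega) (by omega),
            FF_eval n i a k (l + 1) m (m + 1) r (r + (l - k) - (n:ℤ)) hk hr0 (by omega)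
              (by linarith) (by omega) (by omega)]
          simp only [if_neg (show ¬(r = 0) by omega),
            if_neg (show ¬(r + (l - k) - (n:ℤ) = 0) by omega)]
          ring_nf
        · rw [AA_out n i a (by omega), show l - 1 - m = (k - 1 - m) + (n:ℤ) by omega, hrow0]
      have A4 : AA n i a (k + 1) l = a (k - 1 - m) (l - 2 - m) + a (k - m) (l - 2 - m) := by
        rw [AA_in n i a (by omega) (by omega),
          FF_eval n i a (k + 1) l (m + 1) (m + 1) 0 (r + (l - k) - ((n:ℤ)+1))
            (by linarith) (by omega) (by omega)
            (by linarith) (by omega) (by omega)]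
        simp only [if_pos (rfl : (0:ℤ) = 0), if_true,
          if_neg (show ¬(r + (l - k) - ((n:ℤ)+1) = 0) by omega)]
        ring_nf
      rw [A1, A2, A3, A4]
      have H := hdia (k - 1 - m) (l - 2 - m) (by omega) (by omega)
      rw [show k - 1 - m + 1 = k - m by ring, show l - 2 - m + 1 = l - 1 - m by ring] at H
      linear_combination H
    · -- case (5): l new
      have A1 : AA n i a k l = a (k - 1 - m) (l - 1 - m) + a (k - 1 - m) (l - 2 - m) := by
        rw [AA_in n i a (by omega) (by omega),
          FF_eval n i a k l m (m + 1) r 0 hk hr0 (by omega)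
            (by linarith) (by omega) (by omega)]
        simp only [if_neg (show ¬(r = 0) by omega), if_pos (rfl : (0:ℤ) = 0), if_true]
        ring_nf
      have A2 : AA n i a (k + 1) (l + 1) = a (k - m) (l - 1 - m) := by
        rw [AA_in n i a (by omega) (by omega),
          FF_eval n i a (k + 1) (l + 1) m (m + 1) (r + 1) 1 (by linarith) (by omega)
            (by omega) (by linarith) (by omega) (by omega)]
        simp only [if_neg (show ¬(r + 1 = 0) by omega), if_neg (show ¬((1:ℤ) = 0) by omega)]
        ring_nf
      have A3 : AA n i a k (l + 1) = a (k - 1 - m) (l - 1 - m) := by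
        by_cases hd' : l - k ≤ (n:ℤ) - 1
        · rw [AA_in n i a (by omega) (by omega),
            FF_eval n i a k (l + 1) m (m + 1) r 1 hk hr0 (by omega)
              (by linarith) (by omega) (by omega)]
          simp only [if_neg (show ¬(r = 0) by omega), if_neg (show ¬((1:ℤ) = 0) by omega)]
          ring_nf
        · rw [AA_out n i a (by omega), show l - 1 - m = (k - 1 - m) + (n:ℤ) by omega, hrow0]
      have A4 : AA n i a (k + 1) l = a (k - m) (l - 1 - m) + a (k - m) (l - 2 - m) := by
        rw [AA_in n i a (by omega) (by omega),
          FF_eval n i a (k + 1) l m (m + 1) (r + 1) 0 (by linarith) (by omega)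
            (by omega) (by linarith) (by omega) (by omega)]
        simp only [if_neg (show ¬(r + 1 = 0) by omega), if_pos (rfl : (0:ℤ) = 0), if_true]
        ring_nf
      rw [A1, A2, A3, A4]
      have H := hdia (k - 1 - m) (l - 2 - m) (by omega) (by omega)
      rw [show k - 1 - m + 1 = k - m by ring, show l - 2 - m + 1 = l - 1 - m by ring] at H
      linear_combination H
    · -- case (6): l+1 new
      have A1 : AA n i a k l = a (k - 1 - m) (l - 1 - m) := by
        rw [AA_in n i a (by omega) (by omega),
          FF_eval n i a k l m m r (r + (l - k)) hk hr0 (by omega)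
            (by linarith) (by omega) (by omega)]
        simp only [if_neg (show ¬(r = 0) by omega), if_neg (show ¬(r + (l - k) = 0) by omega)]
        ring_nf
      have A2 : AA n i a (k + 1) (l + 1) = a (k - m) (l - m) + a (k - m) (l - 1 - m) := by
        rw [AA_in n i a (by omega) (by omega),
          FF_eval n i a (k + 1) (l + 1) m (m + 1) (r + 1) 0 (by linarith) (by omega)
            (by omega) (by linarith) (by omega) (by omega)]
        simp only [if_neg (show ¬(r + 1 = 0) by omega), if_pos (rfl : (0:ℤ) = 0), if_true]
        ring_nf
      have A3 : AA n i a k (l + 1) = a (k - 1 - m) (l - m) + a (k - 1 - m) (l - 1 - m) := by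
        rw [AA_in n i a (by omega) (by omega),
          FF_eval n i a k (l + 1) m (m + 1) r 0 hk hr0 (by omega)
            (by linarith) (by omega) (by omega)]
        simp only [if_neg (show ¬(r = 0) by omega), if_pos (rfl : (0:ℤ) = 0), if_true]
        ring_nf
      have A4 : AA n i a (k + 1) l = a (k - m) (l - 1 - m) := by
        by_cases hd' : k + 1 < l
        · rw [AA_in n i a hd' (by omega),
            FF_eval n i a (k + 1) l m m (r + 1) (r + (l - k)) (by linarith) (by omega)
              (by omega) (by linarith) (by omega) (by omega)]
          simp only [if_neg (show ¬(r + 1 = 0) by omega),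
            if_neg (show ¬(r + (l - k) = 0) by omega)]
          ring_nf
        · rw [AA_out n i a (by omega), show l - 1 - m = k - m by omega]
          exact (h00 _).symm
      rw [A1, A2, A3, A4]
      have H := hdia (k - 1 - m) (l - 1 - m) (by omega) (by omega)
      rw [show k - 1 - m + 1 = k - m by ring, show l - 1 - m + 1 = l - m by ring] at H
      linear_combination H
    · -- case (7): generic, no new vertex involved, small side
      have A1 : AA n i a k l = a (k - 1 - m) (l - 1 - m) := by
        rw [AA_in n i a (by omega) (by omega),
          FF_eval n i a k l m m r (r + (l - k)) hk hr0 (by omega)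
            (by linarith) (by omega) (by omega)]
        simp only [if_neg (show ¬(r = 0) by omega), if_neg (show ¬(r + (l - k) = 0) by omega)]
        ring_nf
      have A2 : AA n i a (k + 1) (l + 1) = a (k - m) (l - m) := by
        rw [AA_in n i a (by omega) (by omega),
          FF_eval n i a (k + 1) (l + 1) m m (r + 1) (r + (l - k) + 1) (by linarith) (by omega)
            (by omega) (by linarith) (by omega) (by omega)]
        simp only [if_neg (show ¬(r + 1 = 0) by omega),
          if_neg (show ¬(r + (l - k) + 1 = 0) by omega)]
        ring_nf
      have A3 : AA n i a k (l + 1) = a (k - 1 - m) (l - m) := by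
        rw [AA_in n i a (by omega) (by omega),
          FF_eval n i a k (l + 1) m m r (r + (l - k) + 1) hk hr0 (by omega)
            (by linarith) (by omega) (by omega)]
        simp only [if_neg (show ¬(r = 0) by omega),
          if_neg (show ¬(r + (l - k) + 1 = 0) by omega)]
        ring_nf
      have A4 : AA n i a (k + 1) l = a (k - m) (l - 1 - m) := by
        by_cases hd' : k + 1 < l
        · rw [AA_in n i a hd' (by omega),
            FF_eval n i a (k + 1) l m m (r + 1) (r + (l - k)) (by linarith) (by omega)
              (by omega) (by linarith) (by omega) (by omega)]
          simp only [if_neg (show ¬(r + 1 = 0) by omega),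
            if_neg (show ¬(r + (l - k) = 0) by omega)]
          ring_nf
        · rw [AA_out n i a (by omega), show l - 1 - m = k - m by omega]
          exact (h00 _).symm
      rw [A1, A2, A3, A4]
      have H := hdia (k - 1 - m) (l - 1 - m) (by omega) (by omega)
      rw [show k - 1 - m + 1 = k - m by ring, show l - 1 - m + 1 = l - m by ring] at H
      linear_combination H
    · -- case (8): generic, new vertex strictly inside
      have A1 : AA n i a k l = a (k - 1 - m) (l - 2 - m) := by
        rw [AA_in n i a (by omega) (by omega),
          FF_eval n i a k l m (m + 1) r (r + (l - k) - ((n:ℤ)+1)) hk hr0 (by omega)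
            (by linarith) (by omega) (by omega)]
        simp only [if_neg (show ¬(r = 0) by omega),
          if_neg (show ¬(r + (l - k) - ((n:ℤ)+1) = 0) by omega)]
        ring_nf
      have A2 : AA n i a (k + 1) (l + 1) = a (k - m) (l - 1 - m) := by
        rw [AA_in n i a (by omega) (by omega),
          FF_eval n i a (k + 1) (l + 1) m (m + 1) (r + 1) (r + (l - k) - (n:ℤ))
            (by linarith) (by omega) (by omega)
            (by linarith) (by omega) (by omega)]
        simp only [if_neg (show ¬(r + 1 = 0) by omega),
          if_neg (show ¬(r + (l - k) - (n:ℤ) = 0) by omega)]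
        ring_nf
      have A3 : AA n i a k (l + 1) = a (k - 1 - m) (l - 1 - m) := by
        by_cases hd' : l - k ≤ (n:ℤ) - 1
        · rw [AA_in n i a (by omega) (by omega),
            FF_eval n i a k (l + 1) m (m + 1) r (r + (l - k) - (n:ℤ)) hk hr0 (by omega)
              (by linarith) (by omega) (by omega)]
          simp only [if_neg (show ¬(r = 0) by omega),
            if_neg (show ¬(r + (l - k) - (n:ℤ) = 0) by omega)]
          ring_nf
        · rw [AA_out n i a (by omega), show l - 1 - m = (k - 1 - m) + (n:ℤ) by omega, hrow0]
      have A4 : AA n i a (k + 1) l = a (k - m) (l - 2 - m) := by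
        rw [AA_in n i a (by omega) (by omega),
          FF_eval n i a (k + 1) l m (m + 1) (r + 1) (r + (l - k) - ((n:ℤ)+1))
            (by linarith) (by omega) (by omega)
            (by linarith) (by omega) (by omega)]
        simp only [if_neg (show ¬(r + 1 = 0) by omega),
          if_neg (show ¬(r + (l - k) - ((n:ℤ)+1) = 0) by omega)]
        ring_nf
      rw [A1, A2, A3, A4]
      have H := hdia (k - 1 - m) (l - 2 - m) (by omega) (by omega)
      rw [show k - 1 - m + 1 = k - m by ring, show l - 2 - m + 1 = l - 1 - m by ring] at H
      linear_combination H
  · -- zeros below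
    intro k l h
    exact AA_out n i a (by omega)
  · -- zeros above
    intro k l h
    refine AA_out n i a ?_
    push_cast at h
    omega

private lemma AA_quid (n : ℕ) (hn : 4 ≤ n) (i : ℤ) (a : ℤ → ℤ → ℤ)
    (ha : IsClosedFrieze n a) (q : ℤ → ℤ) (hqa : ∀ x : ℤ, a x (x + 2) = q x) :
    ∀ j m r : ℤ, j - i - 2 = r + ((n:ℤ)+1) * m → 0 ≤ r → r ≤ (n:ℤ) →
      AA n i a j (j + 2) =
        if r = 0 then q (j - m - 1) + 1
        else if r = (n:ℤ) - 1 then q (j - 1 - m) + 1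
        else if r = (n:ℤ) then 1
        else q (j - 1 - m) := by
  obtain ⟨h00, h01, hrow1, hrow0, hpos, hdia, hlo, hhi⟩ := ha
  intro j m r hk hr0 hr1
  rcases (by omega : r = 0 ∨ r = (n:ℤ) - 1 ∨ r = (n:ℤ) ∨ (1 ≤ r ∧ r ≤ (n:ℤ) - 2))
    with hr | hr | hr | hr
  · rw [if_pos hr]
    rw [AA_in n i a (by omega) (by omega),
      FF_eval n i a j (j + 2) m m r (r + 2) hk hr0 (by omega) (by linarith) (by omega) (by omega)]
    simp only [if_pos hr, if_neg (show ¬(r + 2 = 0) by omega)]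
    have t1 : a (j - m - 1) (j + 2 - 1 - m) = q (j - m - 1) := by
      rw [show j + 2 - 1 - m = (j - m - 1) + 2 by ring]; exact hqa _
    have t2 : a (j - m) (j + 2 - 1 - m) = 1 := by
      rw [show j + 2 - 1 - m = (j - m) + 1 by ring]; exact h01 _
    rw [t1, t2]; ring
  · rw [if_neg (by omega), if_pos hr]
    rw [AA_in n i a (by omega) (by omega),
      FF_eval n i a j (j + 2) m (m + 1) r 0 hk hr0 (by omega)
        (by linarith) (by omega) (by omega)]
    simp only [if_neg (show ¬(r = 0) by omega), if_pos (rfl : (0:ℤ) = 0), if_true]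
    have t1 : a (j - 1 - m) (j + 2 - (m + 1)) = q (j - 1 - m) := by
      rw [show j + 2 - (m + 1) = (j - 1 - m) + 2 by ring]; exact hqa _
    have t2 : a (j - 1 - m) (j + 2 - (m + 1) - 1) = 1 := by
      rw [show j + 2 - (m + 1) - 1 = (j - 1 - m) + 1 by ring]; exact h01 _
    rw [t1, t2]; ring
  · rw [if_neg (by omega), if_neg (by omega), if_pos hr]
    rw [AA_in n i a (by omega) (by omega),
      FF_eval n i a j (j + 2) m (m + 1) r 1 hk hr0 (by omega)
        (by linarith) (by omega) (by omega)]
    simp only [if_neg (show ¬(r = 0) by omega), if_neg (show ¬((1:ℤ) = 0) by omega)]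
    have t1 : a (j - 1 - m) (j + 2 - 1 - (m + 1)) = 1 := by
      rw [show j + 2 - 1 - (m + 1) = (j - 1 - m) + 1 by ring]; exact h01 _
    rw [t1]; ring
  · rw [if_neg (by omega), if_neg (by omega), if_neg (by omega)]
    rw [AA_in n i a (by omega) (by omega),
      FF_eval n i a j (j + 2) m m r (r + 2) hk hr0 (by omega) (by linarith) (by omega) (by omega)]
    simp only [if_neg (show ¬(r = 0) by omega), if_neg (show ¬(r + 2 = 0) by omega)]
    have t1 : a (j - 1 - m) (j + 2 - 1 - m) = q (j - 1 - m) := by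
      rw [show j + 2 - 1 - m = (j - 1 - m) + 2 by ring]; exact hqa _
    rw [t1]; ring

/-- Gluing: inserting a 1 between positions `i` and `i+1` of a quiddity sequence of order `n`
and increasing both neighbours by 1 yields a quiddity sequence of order `n + 1`. -/
theorem quiddity_glue (n : ℕ) (hn : 4 ≤ n) (q : ℤ → ℤ) (hq : IsQuiddityZ n q) (i : ℤ)
    (q' : ℤ → ℤ)
    (hper : ∀ j : ℤ, q' (j + (n + 1 : ℕ)) = q' j)
    (h0 : q' i = q i + 1)
    (h1 : q' (i + 1) = 1)
    (h2 : q' (i + 2) = q (i + 1) + 1)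
    (h3 : ∀ j : ℤ, i + 3 ≤ j → j ≤ i + n → q' j = q (j - 1)) :
    IsQuiddityZ (n + 1) q' := by
  obtain ⟨hqper, a, ha, hqa⟩ := hq
  have hN : (0:ℤ) < (n:ℤ)+1 := by positivity
  have hq'per : ∀ x mm : ℤ, q' (x + mm * ((n:ℤ)+1)) = q' x := by
    refine per_int ?_
    intro x
    have := hper x
    push_cast at this
    exact this
  have hqperZ : ∀ x mm : ℤ, q (x + mm * (n:ℤ)) = q x := per_int hqper
  refine ⟨hper, AA n i a, AA_frieze n hn i a ha, ?_⟩
  intro j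
  obtain ⟨m, r, hk, hr0, hr1⟩ : ∃ m r : ℤ, j - i - 2 = r + ((n:ℤ)+1) * m ∧ 0 ≤ r ∧ r ≤ (n:ℤ) := by
    refine ⟨(j - i - 2) / ((n:ℤ)+1), (j - i - 2) % ((n:ℤ)+1),
      (Int.emod_add_mul_ediv (j - i - 2) ((n:ℤ)+1)).symm, Int.emod_nonneg _ (by omega), ?_⟩
    have := Int.emod_lt_of_pos (j - i - 2) hN
    omega
  rw [AA_quid n hn i a ha q hqa j m r hk hr0 hr1]
  rcases (by omega : r = 0 ∨ r = (n:ℤ) - 1 ∨ r = (n:ℤ) ∨ (1 ≤ r ∧ r ≤ (n:ℤ) - 2))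
    with hr | hr | hr | hr
  · rw [if_pos hr]
    have e1 : q' j = q (i + 1) + 1 := by
      rw [show j = (i + 2) + m * ((n:ℤ)+1) by linarith, hq'per, h2]
    have e2 : q (j - m - 1) = q (i + 1) := by
      rw [show j - m - 1 = (i + 1) + m * (n:ℤ) by linarith, hqperZ]
    rw [e1, e2]
  · rw [if_neg (by omega), if_pos hr]
    have e1 : q' j = q i + 1 := by
      rw [show j = i + (m + 1) * ((n:ℤ)+1) by linarith, hq'per, h0]
    have e2 : q (j - 1 - m) = q i := by
      rw [show j - 1 - m = i + (m + 1) * (n:ℤ) by linarith, hqperZ]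
    rw [e1, e2]
  · rw [if_neg (by omega), if_neg (by omega), if_pos hr]
    have e1 : q' j = 1 := by
      rw [show j = (i + 1) + (m + 1) * ((n:ℤ)+1) by linarith, hq'per, h1]
    rw [e1]
  · rw [if_neg (by omega), if_neg (by omega), if_neg (by omega)]
    have e1 : q' j = q (i + 2 + r - 1) := by
      rw [show j = (i + 2 + r) + m * ((n:ℤ)+1) by linarith, hq'per]
      exact h3 (i + 2 + r) (by omega) (by omega)
    have e2 : q (j - 1 - m) = q (i + 2 + r - 1) := by
      rw [show j - 1 - m = (i + 2 + r - 1) + m * (n:ℤ) by linarith, hqperZ]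
    rw [e1, e2]
end

section
/- Every closed integral frieze pattern of order n is n-periodic, i.e., its entries satisfy a_{i,j} = a_{i+n, j+n} for all valid indices, and moreover the frieze is invariant under the glide reflection a_{i,j} = a_{j, i+n}. -/
/-- Every closed integral frieze pattern of order `n` is `n`-periodic and invariant under
the glide reflection `a_{i,j} = a_{j, i+n}`. -/
theorem closed_frieze_periodic_glide (n : ℕ) (hn : 3 ≤ n) (a : ℤ → ℤ → ℤ)
    (h : IsClosedFrieze n a) :
    (∀ i j : ℤ, a (i + n) (j + n) = a i j) ∧ (∀ i j : ℤ, a i j = a j (i + n)) := by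
  obtain ⟨h1, h2, h3, h4, h5, h6, h7, h8⟩ := h
  -- positivity on the whole band interior (including the rows of 1s)
  have hpos : ∀ i j : ℤ, i + 1 ≤ j → j ≤ i + n - 1 → 0 < a i j := by
    intro i j hij hji
    rcases eq_or_lt_of_le hij with he | hlt
    · rw [← he, h2]; norm_num
    · rcases eq_or_lt_of_le hji with he2 | hlt2
      · rw [he2, h3]; norm_num
      · exact h5 i j (by omega) (by omega)
  -- row recurrence: a i (j+1) = a (j-1) (j+1) * a i j - a i (j-1)
  have hrow : ∀ d : ℕ, ∀ i j : ℤ, j = i + 1 + d → j ≤ i + n - 1 →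
      a i (j + 1) = a (j - 1) (j + 1) * a i j - a i (j - 1) := by
    intro d
    induction d with
    | zero =>
      intro i j hj hjn
      have hj' : j = i + 1 := by omega
      subst hj'
      have e1 : i + 1 - 1 = i := by ring
      rw [e1, h2, h1]; ring
    | succ d ih =>
      intro i j hj hjn
      have IH := ih (i + 1) j (by omega) (by omega)
      have D1 := h6 i j (by omega) (by omega)
      have D2 := h6 i (j - 1) (by omega) (by omega)
      have e : j - 1 + 1 = j := by ring
      rw [e] at D2
      have Bpos := hpos (i + 1) j (by omega) (by omega)
      have key : (a i (j + 1) - (a (j - 1) (j + 1) * a i j - a i (j - 1))) * a (i + 1) j = 0 := by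
        linear_combination (a i j) * IH + D2 - D1
      rcases mul_eq_zero.mp key with h0 | h0
      · linarith
      · exact absurd h0 (by positivity)
  -- column recurrence: a (j-1) k = a (j-1) (j+1) * a j k - a (j+1) k
  have hcol : ∀ d : ℕ, ∀ j k : ℤ, k = j + 1 + d → k ≤ j + n - 1 →
      a (j - 1) k = a (j - 1) (j + 1) * a j k - a (j + 1) k := by
    intro d
    induction d with
    | zero =>
      intro j k hk hkn
      have hk' : k = j + 1 := by omega
      subst hk'
      rw [h2, h1]; ring
    | succ d ih =>
      intro j k hk hkn
      have IH := ih j (k - 1) (by omega) (by omega)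
      have D1 := h6 (j - 1) (k - 1) (by omega) (by omega)
      have D2 := h6 j (k - 1) (by omega) (by omega)
      have e1 : j - 1 + 1 = j := by ring
      have e2 : k - 1 + 1 = k := by ring
      rw [e1, e2] at D1
      rw [e2] at D2
      have Bpos := hpos j (k - 1) (by omega) (by omega)
      have key : (a (j - 1) k - (a (j - 1) (j + 1) * a j k - a (j + 1) k)) * a j (k - 1) = 0 := by
        linear_combination (a j k) * IH - D1 + D2
      rcases mul_eq_zero.mp key with h0 | h0
      · linarith
      · exact absurd h0 (by positivity)
  -- glide reflection on the band, by two-step strong induction on j - i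
  have hband : ∀ d : ℕ, ∀ i j : ℤ, j = i + d → (d : ℤ) ≤ n → a i j = a j (i + n) := by
    intro d
    induction d using Nat.strong_induction_on with
    | _ d ih =>
      match d with
      | 0 =>
        intro i j hj _
        have hj' : j = i := by omega
        subst hj'
        rw [h1, h4]
      | 1 =>
        intro i j hj _
        have hj' : j = i + 1 := by omega
        subst hj'
        rw [h2, show i + (n : ℤ) = i + 1 + n - 1 from by ring, h3]
      | (d + 2) =>
        intro i j hj hd
        have IH1 := ih (d + 1) (by omega) i (j - 1) (by push_cast; omega) (by push_cast at hd ⊢; omega)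
        have IH0 := ih d (by omega) i (j - 2) (by push_cast at hj ⊢; omega) (by push_cast at hd ⊢; omega)
        have R := hrow d i (j - 1) (by push_cast at hj ⊢; omega) (by push_cast at hd hj; omega)
        have C := hcol (n - (d + 2)) (j - 1) (i + n) (by push_cast at hd hj ⊢; omega)
          (by push_cast at hd hj; omega)
        have e1 : j - 1 + 1 = j := by ring
        have e2 : j - 1 - 1 = j - 2 := by ring
        rw [e1, e2] at R C
        rw [R, IH1, IH0]
        linarith [C]
  -- glide reflection everywhere
  have hglide : ∀ i j : ℤ, a i j = a j (i + n) := by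
    intro i j
    rcases lt_or_ge j i with hlt | hle
    · rw [h7 i j hlt, h8 j (i + n) (by omega)]
    · rcases le_or_gt j (i + n) with hle2 | hlt2
      · exact hband (j - i).toNat i j (by omega) (by omega)
      · rw [h8 i j hlt2, h7 j (i + n) (by omega)]
  refine ⟨fun i j => ?_, hglide⟩
  rw [hglide i j, hglide j (i + n)]
end

section
/- Let x_{ij} (1 ≤ i < j ≤ n) be the cluster variables of the cluster algebra of type A_{n-3} associated to a convex n-gon, with frozen variables x_{i,i+1} and x_{1,n}. Let M(x) be the symmetric n×n matrix with M(x)_{ii} = 0 and M(x)_{ij} = x_{ij}. Then det M(x) = -(-2)^{n-2} x_{12} x_{23} ··· x_{n-1,n} x_{n,1}. -/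
open Matrix Finset

section Generic

variable {S : Type*} [CommRing S]

def clPl (u w : ℕ → S) (i j : ℕ) : S := u i * w j - u j * w i

def clM (u w : ℕ → S) (n : ℕ) : Matrix (Fin n) (Fin n) S :=
  Matrix.of fun i j => if (i : ℕ) ≤ (j : ℕ) then clPl u w i j else clPl u w j i

lemma clM_apply_le (u w : ℕ → S) {n : ℕ} {i j : Fin n} (h : (i:ℕ) ≤ (j:ℕ)) :
    clM u w n i j = clPl u w i j := if_pos h

lemma clM_apply_gt (u w : ℕ → S) {n : ℕ} {i j : Fin n} (h : (j:ℕ) < (i:ℕ)) :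
    clM u w n i j = clPl u w j i := if_neg (not_le.mpr h)

set_option maxHeartbeats 1000000 in
lemma clM_step (u w : ℕ → S) (n : ℕ) :
    (clPl u w (n+1) (n+2))^2 * (clM u w (n+4)).det =
      -(2 * clPl u w (n+1) (n+2) * clPl u w (n+2) (n+3) * clPl u w (n+1) (n+3))
          * (clM u w (n+3)).det
        - 4 * (clPl u w (n+1) (n+2))^2 * (clPl u w (n+2) (n+3))^2
          * (clM u w (n+2)).det := by
  classical
  set a := clPl u w (n+1) (n+2) with ha
  set b := clPl u w (n+2) (n+3) with hb
  set c := clPl u w (n+1) (n+3) with hc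
  set M := clM u w (n+4) with hMdef
  set i1 : Fin (n+4) := ⟨n+1, by omega⟩ with hi1
  set i2 : Fin (n+4) := ⟨n+2, by omega⟩ with hi2
  set i3 : Fin (n+4) := ⟨n+3, by omega⟩ with hi3
  have hval1 : (i1 : ℕ) = n+1 := rfl
  have hval2 : (i2 : ℕ) = n+2 := rfl
  have hval3 : (i3 : ℕ) = n+3 := rfl
  clear_value a b c M i1 i2 i3
  have h31 : i3 ≠ i1 := by simp [hi1, hi3, Fin.ext_iff]
  have h32 : i3 ≠ i2 := by simp [hi2, hi3, Fin.ext_iff]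
  -- row stage
  set M1 := updateRow M i3 (a • M i3) with hM1
  set M2 := updateRow M1 i3 (M1 i3 + (-c) • M1 i2) with hM2
  set M3 := updateRow M2 i3 (M2 i3 + b • M2 i1) with hM3
  clear_value M1 M2 M3
  have hd3 : M3.det = a * M.det := by
    rw [hM3, det_updateRow_add_smul_self _ h31, hM2, det_updateRow_add_smul_self _ h32,
      hM1, det_updateRow_smul, updateRow_eq_self]
  -- column stage
  set M4 := updateCol M3 i3 (a • fun k => M3 k i3) with hM4
  set M5 := updateCol M4 i3 (fun k => M4 k i3 + (-c) • M4 k i2) with hM5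
  set M6 := updateCol M5 i3 (fun k => M5 k i3 + b • M5 k i1) with hM6
  clear_value M4 M5 M6
  have hd6 : M6.det = a ^ 2 * M.det := by
    rw [hM6, det_updateCol_add_smul_self _ h31, hM5, det_updateCol_add_smul_self _ h32,
      hM4, det_updateCol_smul, updateCol_eq_self, hd3]
    ring
  -- the rows of M3
  have hM3off : ∀ i, i ≠ i3 → M3 i = M i := by
    intro i hi
    rw [hM3, updateRow_ne hi, hM2, updateRow_ne hi, hM1, updateRow_ne hi]
  have hM3row : ∀ j, M3 i3 j = a * M i3 j - c * M i2 j + b * M i1 j := by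
    intro j
    have h13 : i1 ≠ i3 := h31.symm
    have h23 : i2 ≠ i3 := h32.symm
    rw [hM3, updateRow_self]
    simp only [Pi.add_apply, Pi.smul_apply, smul_eq_mul]
    rw [hM2, updateRow_self, updateRow_ne h13]
    simp only [Pi.add_apply, Pi.smul_apply, smul_eq_mul]
    rw [hM1, updateRow_self, updateRow_ne h23, updateRow_ne h13]
    simp only [Pi.smul_apply, smul_eq_mul]
    ring
  have hM6col : ∀ i, M6 i i3 = a * M3 i i3 - c * M3 i i2 + b * M3 i i1 := by
    intro i
    have h13 : i1 ≠ i3 := h31.symm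
    have h23 : i2 ≠ i3 := h32.symm
    rw [hM6, updateCol_self]
    rw [hM5, updateCol_self, updateCol_ne h13]
    rw [hM4, updateCol_self, updateCol_ne h23, updateCol_ne h13]
    simp only [Pi.smul_apply, smul_eq_mul]
    ring
  have hM6off : ∀ i j, j ≠ i3 → M6 i j = M3 i j := by
    intro i j hj
    rw [hM6, updateCol_ne hj, hM5, updateCol_ne hj, hM4, updateCol_ne hj]
  -- the explicit form of M6
  set B : Matrix (Fin (n+4)) (Fin (n+4)) S := Matrix.of (fun i j =>
    if i = i3 then (if j = i2 then 2*a*b else if j = i3 then -(2*a*b*c) else 0)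
    else if j = i3 then (if i = i2 then 2*a*b else 0) else M i j) with hB
  clear_value B
  have hrowval : ∀ j : Fin (n+4), j ≠ i3 →
      a * M i3 j - c * M i2 j + b * M i1 j = (if j = i2 then 2*a*b else 0) := by
    intro j hj
    have hjlt := j.isLt
    have hj' : (j:ℕ) ≠ n+3 := fun h => hj (Fin.ext (by rw [hval3]; exact h))
    rcases eq_or_ne j i2 with hj2 | hj2
    · rw [if_pos hj2, hj2, hMdef,
        clM_apply_gt u w (show (i2:ℕ) < (i3:ℕ) by rw [hval2, hval3]; omega),
        clM_apply_le u w (le_refl (i2:ℕ)),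
        clM_apply_le u w (show (i1:ℕ) ≤ (i2:ℕ) by rw [hval1, hval2]; omega)]
      rw [ha, hb, hc]
      simp only [clPl, hval1, hval2, hval3]; ring
    · rw [if_neg hj2]
      have hj2' : (j:ℕ) ≠ n+2 := fun h => hj2 (Fin.ext (by rw [hval2]; exact h))
      rcases eq_or_ne j i1 with hj1 | hj1
      · rw [hj1, hMdef,
          clM_apply_gt u w (show (i1:ℕ) < (i3:ℕ) by rw [hval1, hval3]; omega),
          clM_apply_gt u w (show (i1:ℕ) < (i2:ℕ) by rw [hval1, hval2]; omega),
          clM_apply_le u w (le_refl (i1:ℕ))]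
        rw [ha, hb, hc]
        simp only [clPl, hval1, hval2, hval3]; ring
      · have hj1' : (j:ℕ) ≠ n+1 := fun h => hj1 (Fin.ext (by rw [hval1]; exact h))
        rw [hMdef,
          clM_apply_gt u w (show (j:ℕ) < (i3:ℕ) by rw [hval3]; omega),
          clM_apply_gt u w (show (j:ℕ) < (i2:ℕ) by rw [hval2]; omega),
          clM_apply_gt u w (show (j:ℕ) < (i1:ℕ) by rw [hval1]; omega)]
        rw [ha, hb, hc]
        simp only [clPl, hval1, hval2, hval3]; ring
  have hMsymm : ∀ i j : Fin (n+4), M i j = M j i := by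
    intro i j
    rcases le_or_gt (i:ℕ) (j:ℕ) with h | h
    · rcases eq_or_lt_of_le h with h' | h'
      · rw [Fin.ext h']
      · rw [hMdef, clM_apply_le u w h, clM_apply_gt u w h']
    · rw [hMdef, clM_apply_gt u w h, clM_apply_le u w h.le]
  have hMB : M6 = B := by
    ext i j
    rcases eq_or_ne j i3 with h3 | hj3
    · rw [h3, hM6col i]
      rcases eq_or_ne i i3 with h3' | hi3'
      · rw [h3', hM3row, hM3row, hM3row, hB]
        simp only [of_apply, eq_self_iff_true, if_true, if_neg h32]
        rw [hMdef,
          clM_apply_le u w (le_refl (i3:ℕ)),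
          clM_apply_le u w (show (i2:ℕ) ≤ (i3:ℕ) by rw [hval2, hval3]; omega),
          clM_apply_le u w (show (i1:ℕ) ≤ (i3:ℕ) by rw [hval1, hval3]; omega),
          clM_apply_gt u w (show (i2:ℕ) < (i3:ℕ) by rw [hval2, hval3]; omega),
          clM_apply_le u w (le_refl (i2:ℕ)),
          clM_apply_le u w (show (i1:ℕ) ≤ (i2:ℕ) by rw [hval1, hval2]; omega),
          clM_apply_gt u w (show (i1:ℕ) < (i3:ℕ) by rw [hval1, hval3]; omega),
          clM_apply_gt u w (show (i1:ℕ) < (i2:ℕ) by rw [hval1, hval2]; omega),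
          clM_apply_le u w (le_refl (i1:ℕ))]
        rw [ha, hb, hc]
        simp only [clPl, hval1, hval2, hval3]; ring
      · rw [hM3off i hi3', hB]
        simp only [of_apply, if_neg hi3', eq_self_iff_true, if_true]
        rw [hMsymm i i3, hMsymm i i2, hMsymm i i1]
        exact hrowval i hi3'
    · rw [hM6off i j hj3]
      rcases eq_or_ne i i3 with h3' | hi3'
      · rw [h3', hM3row j, hB]
        simp only [of_apply, eq_self_iff_true, if_true, if_neg hj3]
        exact hrowval j hj3
      · rw [hM3off i hi3', hB]
        simp only [of_apply, if_neg hi3', if_neg hj3]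

  -- helper index facts
  have hlast : i3 = Fin.last (n+3) := by rw [hi3]; rfl
  have hccne3 : ∀ i : Fin (n+3), Fin.castSucc i ≠ i3 := by
    intro i h
    have hv := congrArg Fin.val h
    rw [Fin.coe_castSucc, hval3] at hv
    have := i.isLt; omega
  -- determinant of B
  have hrowB : B i3 = Pi.single i2 (2*a*b) + Pi.single i3 (-(2*a*b*c)) := by
    funext j
    rw [hB]
    simp only [of_apply, eq_self_iff_true, if_true, Pi.add_apply]
    rcases eq_or_ne j i2 with h2 | h2
    · rw [if_pos h2, h2, Pi.single_eq_same, Pi.single_eq_of_ne (Ne.symm h32), add_zero]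
    · rcases eq_or_ne j i3 with h3 | h3
      · rw [if_neg h2, if_pos h3, h3, Pi.single_eq_same, Pi.single_eq_of_ne h32, zero_add]
      · rw [if_neg h2, if_neg h3, Pi.single_eq_of_ne h2, Pi.single_eq_of_ne h3, add_zero]
  have hsplit : B.det = (updateRow B i3 (Pi.single i2 (2*a*b))).det
      + (updateRow B i3 (Pi.single i3 (-(2*a*b*c)))).det := by
    rw [← det_updateRow_add, ← hrowB, updateRow_eq_self]
  -- second piece
  have hdet3 : (updateRow B i3 (Pi.single i3 (-(2*a*b*c)))).det
      = -(2*a*b*c) * (clM u w (n+3)).det := by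
    set B2 := updateRow B i3 (Pi.single i3 (-(2*a*b*c))) with hB2
    clear_value B2
    rw [det_succ_row B2 i3]
    rw [Finset.sum_eq_single_of_mem i3 (Finset.mem_univ i3) (by
      intro j _ hj
      rw [hB2, updateRow_self, Pi.single_eq_of_ne hj, mul_zero, zero_mul])]
    have hsub : B2.submatrix (i3.succAbove) (i3.succAbove) = clM u w (n+3) := by
      ext i j
      rw [Matrix.submatrix_apply, hlast, Fin.succAbove_last]
      rw [hB2, updateRow_ne (hlast ▸ hccne3 i), hB]
      simp only [of_apply, if_neg (hccne3 i), if_neg (hccne3 j)]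
      rw [hMdef]
      rcases le_or_gt ((Fin.castSucc i : Fin (n+4)) : ℕ) ((Fin.castSucc j : Fin (n+4)) : ℕ)
        with h | h
      · rw [clM_apply_le u w h,
          clM_apply_le u w (show ((i : Fin (n+3)) : ℕ) ≤ ((j : Fin (n+3)) : ℕ) by
            simpa using h)]
        simp [clPl]
      · rw [clM_apply_gt u w h,
          clM_apply_gt u w (show ((j : Fin (n+3)) : ℕ) < ((i : Fin (n+3)) : ℕ) by
            simpa using h)]
        simp [clPl]
    rw [hsub, hB2, updateRow_self, Pi.single_eq_same]
    have hev : (-1 : S) ^ ((i3 : ℕ) + (i3 : ℕ)) = 1 := Even.neg_one_pow ⟨(i3:ℕ), rfl⟩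
    rw [hev, one_mul]
  -- first piece
  have hrowmap : ∀ i : Fin (n+3), i3.succAbove i = Fin.castSucc i := by
    rw [hlast]; intro i; rw [Fin.succAbove_last]
  have hdet2 : (updateRow B i3 (Pi.single i2 (2*a*b))).det
      = -(4*a^2*b^2) * (clM u w (n+2)).det := by
    set B1 := updateRow B i3 (Pi.single i2 (2*a*b)) with hB1
    clear_value B1
    rw [det_succ_row B1 i3]
    rw [Finset.sum_eq_single_of_mem i2 (Finset.mem_univ i2) (by
      intro j _ hj
      rw [hB1, updateRow_self, Pi.single_eq_of_ne hj, mul_zero, zero_mul])]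
    have hcolmap : i2.succAbove (Fin.last (n+2)) = i3 := by
      rw [Fin.succAbove_of_le_castSucc i2 (Fin.last (n+2)) (by
        rw [Fin.le_def, Fin.coe_castSucc, Fin.val_last, hval2])]
      apply Fin.ext
      rw [Fin.val_succ, Fin.val_last, hval3]
    have hcclast : Fin.castSucc (Fin.last (n+2)) = i2 := by
      apply Fin.ext
      rw [Fin.coe_castSucc, Fin.val_last, hval2]
    set C := B1.submatrix (i3.succAbove) (i2.succAbove) with hC
    have hCdet : C.det = 2*a*b * (clM u w (n+2)).det := by
      rw [det_succ_column C (Fin.last (n+2))]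
      rw [Finset.sum_eq_single_of_mem (Fin.last (n+2)) (Finset.mem_univ _) (by
        intro i _ hi
        have hCi : C i (Fin.last (n+2)) = 0 := by
          rw [hC, Matrix.submatrix_apply, hcolmap, hrowmap i,
            hB1, updateRow_ne (hccne3 i), hB]
          simp only [of_apply, if_neg (hccne3 i), eq_self_iff_true, if_true]
          rw [if_neg (by
            intro h
            exact hi (by
              apply Fin.ext
              have hv := congrArg Fin.val h
              rw [Fin.coe_castSucc, hval2] at hv
              rw [hv, Fin.val_last]))]
        rw [hCi, mul_zero, zero_mul])]
      have hClast : C (Fin.last (n+2)) (Fin.last (n+2)) = 2*a*b := by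
        rw [hC, Matrix.submatrix_apply, hcolmap, hrowmap _,
          hB1, updateRow_ne (hccne3 _), hB]
        simp only [of_apply, if_neg (hccne3 _), eq_self_iff_true, if_true]
        rw [if_pos hcclast]
      have hsub : C.submatrix ((Fin.last (n+2)).succAbove) ((Fin.last (n+2)).succAbove)
          = clM u w (n+2) := by
        ext i j
        have hcc2 : i2.succAbove (Fin.castSucc j) = Fin.castSucc (Fin.castSucc j) := by
          apply Fin.succAbove_of_castSucc_lt
          rw [Fin.lt_def, Fin.coe_castSucc, Fin.coe_castSucc, hval2]
          have := j.isLt; omega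
        rw [Matrix.submatrix_apply, Fin.succAbove_last,
          hC, Matrix.submatrix_apply, hcc2, hrowmap _,
          hB1, updateRow_ne (hccne3 _), hB]
        simp only [of_apply, if_neg (hccne3 _)]
        rw [hMdef]
        rcases le_or_gt ((i : Fin (n+2)) : ℕ) ((j : Fin (n+2)) : ℕ) with h | h
        · rw [clM_apply_le u w (show ((Fin.castSucc (Fin.castSucc i) : Fin (n+4)) : ℕ)
              ≤ ((Fin.castSucc (Fin.castSucc j) : Fin (n+4)) : ℕ) by simpa using h),
            clM_apply_le u w h]
          simp [clPl]
        · rw [clM_apply_gt u w (show ((Fin.castSucc (Fin.castSucc j) : Fin (n+4)) : ℕ)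
              < ((Fin.castSucc (Fin.castSucc i) : Fin (n+4)) : ℕ) by simpa using h),
            clM_apply_gt u w h]
          simp [clPl]
      rw [hClast, hsub]
      have hev : (-1 : S) ^ (((Fin.last (n+2)) : ℕ) + ((Fin.last (n+2)) : ℕ)) = 1 :=
        Even.neg_one_pow ⟨((Fin.last (n+2)) : ℕ), rfl⟩
      rw [hev, one_mul]
    have hB1entry : B1 i3 i2 = 2*a*b := by rw [hB1, updateRow_self, Pi.single_eq_same]
    have hodd : (-1 : S) ^ ((i3 : ℕ) + (i2 : ℕ)) = -1 :=
      Odd.neg_one_pow ⟨n+2, by rw [hval2, hval3]; ring⟩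
    rw [hB1entry, hCdet, hodd]
    ring
  -- conclusion
  calc a^2 * M.det = M6.det := hd6.symm
    _ = B.det := by rw [hMB]
    _ = _ := by rw [hsplit, hdet2, hdet3]; ring

end Generic

noncomputable def clU : ℕ → MvPolynomial (ℕ ⊕ ℕ) ℤ := fun k => MvPolynomial.X (Sum.inl k)
noncomputable def clW : ℕ → MvPolynomial (ℕ ⊕ ℕ) ℤ := fun k => MvPolynomial.X (Sum.inr k)

lemma clPl_ne_zero {i j : ℕ} (h : i ≠ j) : clPl clU clW i j ≠ 0 := by
  intro h0
  have h2 := congrArg (MvPolynomial.eval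
    (Sum.elim (fun k => if k = i then (1:ℤ) else 0) (fun k => if k = j then (1:ℤ) else 0))) h0
  simp only [clPl, clU, clW, _root_.map_sub, _root_.map_mul, MvPolynomial.eval_X, Sum.elim_inl,
    Sum.elim_inr, map_zero, if_pos rfl] at h2
  rw [if_neg h] at h2
  norm_num at h2

lemma clM_det_poly : ∀ n : ℕ, 2 ≤ n →
    (clM clU clW n).det = -(-2 : MvPolynomial (ℕ ⊕ ℕ) ℤ)^(n-2) * clPl clU clW 0 (n-1)
      * ∏ i : Fin (n-1), clPl clU clW i ((i:ℕ)+1) := by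
  intro n
  induction n using Nat.strong_induction_on with
  | _ n ih =>
    intro hn
    rcases lt_or_ge n 4 with h4 | h4
    · interval_cases n
      · rw [show (2:ℕ) - 2 = 0 from rfl, show (2:ℕ) - 1 = 1 from rfl, Matrix.det_fin_two]
        simp only [clM, of_apply, Fin.isValue, Fin.val_zero, Fin.val_one, Fin.prod_univ_one]
        norm_num [clPl]
        ring
      · rw [show (3:ℕ) - 2 = 1 from rfl, show (3:ℕ) - 1 = 2 from rfl, Matrix.det_fin_three]
        simp only [clM, of_apply, Fin.isValue, Fin.val_zero, Fin.val_one, Fin.val_two,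
          Fin.prod_univ_two]
        norm_num [clPl]
        ring
    · obtain ⟨m, rfl⟩ : ∃ m, n = m + 4 := ⟨n - 4, by omega⟩
      have key := clM_step clU clW m
      have ih3 := ih (m+3) (by omega) (by omega)
      have ih2 := ih (m+2) (by omega) (by omega)
      rw [show m+3-2 = m+1 from rfl, show m+3-1 = m+2 from rfl] at ih3
      rw [show m+2-2 = m from rfl, show m+2-1 = m+1 from rfl] at ih2
      rw [show m+4-2 = m+2 from rfl, show m+4-1 = m+3 from rfl]
      have ha : clPl clU clW (m+1) (m+2) ≠ 0 := clPl_ne_zero (by omega)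
      refine mul_left_cancel₀ (pow_ne_zero 2 ha) ?_
      rw [key, ih3, ih2]
      simp only [Fin.prod_univ_castSucc, Fin.coe_castSucc, Fin.val_last]
      simp only [clPl, clU, clW]
      ring

lemma clM_det {S : Type*} [CommRing S] (u w : ℕ → S) (n : ℕ) (hn : 2 ≤ n) :
    (clM u w n).det = -(-2 : S)^(n-2) * clPl u w 0 (n-1)
      * ∏ i : Fin (n-1), clPl u w i ((i:ℕ)+1) := by
  let φ : MvPolynomial (ℕ ⊕ ℕ) ℤ →+* S :=
    (MvPolynomial.eval₂Hom (Int.castRingHom S) (Sum.elim u w) : _ →+* S)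
  have hpl : ∀ i j, φ (clPl clU clW i j) = clPl u w i j := by
    intro i j
    simp [clPl, clU, clW, φ]
  have hmap : (clM clU clW n).map φ = clM u w n := by
    ext i j
    simp only [Matrix.map_apply, clM, of_apply, apply_ite φ, hpl]
  have h := congrArg φ (clM_det_poly n hn)
  rw [RingHom.map_det, RingHom.mapMatrix_apply, hmap] at h
  rw [h, _root_.map_mul, _root_.map_mul, map_prod, map_neg, map_pow, map_neg, map_ofNat]
  simp only [hpl]

/-- The frieze determinant of cluster variables: if `x i j` are the cluster variables of the
cluster algebra of type `A_{n-3}` of a convex `n`-gon (a symmetric family with `x i i = 0`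
satisfying the Ptolemy exchange relations), then the determinant of the symmetric matrix
`(x i j)` equals `-(-2)^(n-2)` times the product of the frozen variables `x i (i+1)`. -/
theorem cluster_frieze_determinant (n : ℕ) [NeZero n] (hn : 4 ≤ n)
    {R : Type*} [CommRing R] [IsDomain R] (x : ZMod n → ZMod n → R)
    (hsymm : ∀ i j, x i j = x j i) (hdiag : ∀ i, x i i = 0)
    (hptolemy : ∀ i j k l : ZMod n, i.val < j.val → j.val < k.val → k.val < l.val →
      x i k * x j l = x i j * x k l + x i l * x j k) :
    (Matrix.of fun i j : ZMod n => x i j).det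
      = -(-2 : R) ^ (n - 2) * ∏ i : ZMod n, x i (i + 1) := by
  classical
  obtain ⟨m, rfl⟩ : ∃ m, n = m + 4 := ⟨n - 4, by omega⟩
  haveI : Fact (1 < m + 4) := ⟨by omega⟩
  have hv0 : (0 : ZMod (m+4)).val = 0 := ZMod.val_zero
  have hv1 : (1 : ZMod (m+4)).val = 1 := ZMod.val_one _
  have h01' : (0 : ZMod (m+4)) ≠ 1 := by
    intro h
    have h' := congrArg ZMod.val h
    rw [hv0, hv1] at h'
    omega
  by_cases h01 : x 0 1 = 0
  · -- degenerate case: the long frozen diagonal vanishes, both sides are zero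
    have hminor : ∀ j k : ZMod (m+4), x 0 j * x 1 k = x 0 k * x 1 j := by
      have aux : ∀ j k : ZMod (m+4), j.val < k.val → x 0 j * x 1 k = x 0 k * x 1 j := by
        intro j k hjk
        rcases Nat.lt_or_ge j.val 2 with hj2 | hj2
        · have hcases : j = 0 ∨ j = 1 := by
            have hj := ZMod.natCast_rightInverse (n := m+4) j
            have : j.val = 0 ∨ j.val = 1 := by omega
            rcases this with h | h
            · left; rw [← hj, h, Nat.cast_zero]
            · right; rw [← hj, h, Nat.cast_one]
          rcases hcases with rfl | rfl
          · rw [hdiag, hsymm 1 0, h01]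
            ring
          · rw [h01, hdiag]
            ring
        · have hpt := hptolemy 0 1 j k (by rw [hv0, hv1]; omega) (by rw [hv1]; omega) hjk
          rw [hpt, h01, zero_mul, zero_add]
      intro j k
      rcases lt_trichotomy j.val k.val with h | h | h
      · exact aux j k h
      · have hj := ZMod.natCast_rightInverse (n := m+4) j
        have hk := ZMod.natCast_rightInverse (n := m+4) k
        have hjkeq : j = k := by rw [← hj, ← hk, h]
        rw [hjkeq]
      · exact (aux k j h).symm
    have hzero : (Matrix.of fun i j : ZMod (m+4) => x i j).det = 0 := by
      set M := Matrix.of (fun i j : ZMod (m+4) => x i j) with hM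
      by_cases hrow : ∀ j, x 0 j = 0
      · exact det_eq_zero_of_row_eq_zero 0 fun j => hrow j
      · push_neg at hrow
        obtain ⟨j0, hj0⟩ := hrow
        have h1 : x 0 j0 * M.det = (updateRow M 1 (x 0 j0 • M 1)).det := by
          rw [det_updateRow_smul, updateRow_eq_self]
        have h2 : x 0 j0 • M 1 = x 1 j0 • M 0 := by
          funext k
          simp only [Pi.smul_apply, smul_eq_mul, hM, of_apply]
          rw [hminor j0 k]
          ring
        have h4 : (updateRow M 1 (x 1 j0 • M 0)).det = 0 := by
          rw [det_updateRow_smul]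
          rw [det_zero_of_row_eq h01' (by rw [updateRow_ne h01', updateRow_self])]
          ring
        have h5 : x 0 j0 * M.det = 0 := by rw [h1, h2, h4]
        exact (mul_eq_zero.mp h5).resolve_left hj0
    rw [hzero]
    have hfac : x (0 : ZMod (m+4)) ((0 : ZMod (m+4)) + 1) = 0 := by
      rw [zero_add, h01]
    rw [Finset.prod_eq_zero (Finset.mem_univ (0 : ZMod (m+4))) hfac, mul_zero]
  · -- main case
    set K := FractionRing R with hK
    set φ : R →+* K := algebraMap R K with hφ
    have hinj : Function.Injective φ := IsFractionRing.injective R K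
    have hφ01 : φ (x 0 1) ≠ 0 := fun h => h01 (hinj (by rw [h, map_zero]))
    set u : ℕ → K := fun k => φ (x 0 ((k : ZMod (m+4)))) with hu
    set w : ℕ → K := fun k =>
      if k = 0 then -1 else φ (x 1 ((k : ZMod (m+4)))) * (φ (x 0 1))⁻¹ with hw
    have key : ∀ i j : ℕ, i < j → j < m+4 → clPl u w i j = φ (x i j) := by
      intro i j hij hj
      have hj0 : j ≠ 0 := by omega
      rcases Nat.eq_zero_or_pos i with rfl | hi0
      · simp only [clPl, hu, hw, if_pos rfl, if_neg hj0, Nat.cast_zero, hdiag, map_zero]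
        ring
      rcases eq_or_ne i 1 with rfl | hi1
      · simp only [clPl, hu, hw, if_neg hj0, if_neg (by omega : (1:ℕ) ≠ 0), Nat.cast_one,
          hdiag, map_zero]
        rw [mul_left_comm, mul_inv_cancel₀ hφ01]; ring
      · have hi2 : 2 ≤ i := by omega
        have hpt := hptolemy 0 1 ((i : ZMod (m+4))) ((j : ZMod (m+4)))
          (by rw [hv0, hv1]; omega)
          (by rw [hv1, ZMod.val_cast_of_lt (show i < m+4 by omega)]; omega)
          (by rw [ZMod.val_cast_of_lt (show i < m+4 by omega),
                ZMod.val_cast_of_lt (show j < m+4 by omega)]; omega)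
        have hpt' : φ (x 0 (i : ZMod (m+4))) * φ (x 1 (j : ZMod (m+4)))
            = φ (x 0 1) * φ (x (i : ZMod (m+4)) (j : ZMod (m+4)))
              + φ (x 0 (j : ZMod (m+4))) * φ (x 1 (i : ZMod (m+4))) := by
          rw [← _root_.map_mul, ← _root_.map_mul, ← _root_.map_mul, ← _root_.map_add, hpt]
        simp only [clPl, hu, hw, if_neg hj0, if_neg (by omega : i ≠ 0)]
        have hinv : φ (x 0 1) * (φ (x 0 1))⁻¹ = 1 := mul_inv_cancel₀ hφ01
        linear_combination (φ (x 0 1))⁻¹ * hpt' + φ (x (i : ZMod (m+4)) (j : ZMod (m+4))) * hinv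
    set e : Fin (m+4) ≃ ZMod (m+4) :=
      { toFun := fun i => ((i : ℕ) : ZMod (m+4))
        invFun := fun z => ⟨z.val, z.val_lt⟩
        left_inv := fun i => Fin.ext (ZMod.val_cast_of_lt i.isLt)
        right_inv := fun z => ZMod.natCast_rightInverse z } with he
    have hmat : ((Matrix.of fun i j : ZMod (m+4) => x i j).map φ).submatrix e e
        = clM u w (m+4) := by
      ext i j
      simp only [Matrix.submatrix_apply, Matrix.map_apply, of_apply, clM, he,
        Equiv.coe_fn_mk]
      rcases lt_trichotomy ((i : Fin (m+4)) : ℕ) ((j : Fin (m+4)) : ℕ) with h | h | h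
      · rw [if_pos h.le]
        exact (key i j h j.isLt).symm
      · have : i = j := Fin.ext h
        subst this
        rw [if_pos le_rfl, hdiag, map_zero]
        simp [clPl]
      · rw [if_neg (not_le.mpr h), hsymm]
        exact (key j i h i.isLt).symm
    have hdet : φ ((Matrix.of fun i j : ZMod (m+4) => x i j).det) = (clM u w (m+4)).det := by
      rw [RingHom.map_det, RingHom.mapMatrix_apply, ← hmat, Matrix.det_submatrix_equiv_self]
    have hprod : clPl u w 0 (m+3) * ∏ i : Fin (m+3), clPl u w i ((i:ℕ)+1)
        = φ (∏ i : ZMod (m+4), x i (i + 1)) := by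
      rw [map_prod]
      rw [← Fintype.prod_equiv e (fun i : Fin (m+4) => φ (x (e i) (e i + 1)))
        (fun z => φ (x z (z + 1))) (fun i => rfl)]
      rw [Fin.prod_univ_castSucc (f := fun i : Fin (m+4) => φ (x (e i) (e i + 1)))]
      have hlastterm : φ (x (e (Fin.last (m+3))) (e (Fin.last (m+3)) + 1))
          = clPl u w 0 (m+3) := by
        have hcast : ((Fin.last (m+3) : ℕ) : ZMod (m+4)) + 1 = 0 := by
          rw [Fin.val_last, show (((m+3 : ℕ)) : ZMod (m+4)) + 1 = ((m+4 : ℕ) : ZMod (m+4))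
            by push_cast; ring, ZMod.natCast_self]
        simp only [he, Equiv.coe_fn_mk, hcast]
        rw [hsymm]
        have := (key 0 (m+3) (by omega) (by omega)).symm
        rw [Nat.cast_zero] at this
        exact this
      rw [hlastterm]
      have hfactors : ∀ i : Fin (m+3),
          φ (x (e (Fin.castSucc i)) (e (Fin.castSucc i) + 1)) = clPl u w i ((i:ℕ)+1) := by
        intro i
        simp only [he, Equiv.coe_fn_mk, Fin.coe_castSucc]
        have hcast : ((i : ℕ) : ZMod (m+4)) + 1 = (((i:ℕ)+1 : ℕ) : ZMod (m+4)) := by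
          push_cast; ring
        rw [hcast]
        exact (key i ((i:ℕ)+1) (by omega) (by have := i.isLt; omega)).symm
      rw [Finset.prod_congr rfl (fun i _ => hfactors i)]
      ring
    apply hinj
    rw [hdet, clM_det u w (m+4) (by omega),
      show m+4-2 = m+2 from rfl, show m+4-1 = m+3 from rfl]
    simp only [_root_.map_mul, map_neg, map_pow, map_ofNat]
    rw [← hprod]
    ring
end
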